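/- arXiv:1508.04074 — 4 statements merged into one kernel-verified Lean document; each statement's English description precedes it below -/
import Mathlib

section
/- Let K be a compact Hausdorff space, ε > 0, and T : c₀ → C(K) a bounded linear operator which is ε-disjointness preserving. Then there exists a disjointness preserving linear operator S : c₀ → C(K) such that ‖S‖ ≤ ‖T‖ and ‖T − S‖ ≤ 257·ε. If moreover T is positive, then S can be chosen with 0 ≤ S ≤ T. -/
open ZeroAtInfty Filter

namespace Stmt8Aux

noncomputable def tr (ε a : ℝ) : ℝ := a - max (min a ε) (-ε)

lemma continuous_tr (ε : ℝ) : Continuous (tr ε) := by unfold tr; fun_prop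

variable {ε : ℝ}

lemma tr_diff_le (hε : 0 < ε) (a : ℝ) : |a - tr ε a| ≤ ε := by
  unfold tr
  rw [abs_le]
  constructor
  · simp only [sub_sub_cancel]; linarith [le_max_right (min a ε) (-ε)]
  · simp only [sub_sub_cancel]; exact max_le (min_le_right a ε) (by linarith)

lemma tr_eq_zero (hε : 0 < ε) (a : ℝ) (h : |a| ≤ ε) : tr ε a = 0 := by
  rw [abs_le] at h
  unfold tr
  rw [min_eq_left h.2, max_eq_left h.1, sub_self]

lemma abs_lt_of_tr_ne (hε : 0 < ε) (a : ℝ) (h : tr ε a ≠ 0) : ε < |a| := by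
  by_contra hc
  exact h (tr_eq_zero hε a (not_lt.mp hc))

lemma tr_of_nonneg (hε : 0 < ε) {a : ℝ} (h : 0 ≤ a) : tr ε a = a - min a ε := by
  unfold tr
  rw [max_eq_left (le_trans (by linarith) (le_min h hε.le))]

lemma tr_of_nonpos (hε : 0 < ε) {a : ℝ} (h : a ≤ 0) : tr ε a = a - max a (-ε) := by
  unfold tr
  rw [min_eq_left (by linarith)]

lemma tr_nonneg_of (hε : 0 < ε) {a : ℝ} (h : 0 ≤ a) : 0 ≤ tr ε a := by
  rw [tr_of_nonneg hε h]
  have := min_le_left a ε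
  linarith

lemma tr_le_self (hε : 0 < ε) {a : ℝ} (h : 0 ≤ a) : tr ε a ≤ a := by
  rw [tr_of_nonneg hε h]
  have := le_min h hε.le
  linarith

lemma tr_abs_le_abs (hε : 0 < ε) (a : ℝ) : |tr ε a| ≤ |a| := by
  rcases le_total 0 a with h | h
  · rw [abs_of_nonneg (tr_nonneg_of hε h), abs_of_nonneg h]
    exact tr_le_self hε h
  · have h1 : tr ε a ≤ 0 := by rw [tr_of_nonpos hε h]; have := le_max_left a (-ε); linarith
    have h2 : a ≤ tr ε a := by rw [tr_of_nonpos hε h]; have := max_le h (by linarith : -ε ≤ (0:ℝ)); linarith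
    rw [abs_of_nonpos h1, abs_of_nonpos h]
    linarith

lemma tr_ne_zero (hε : 0 < ε) (a : ℝ) (h : ε < |a|) : tr ε a ≠ 0 := by
  rcases le_total 0 a with h' | h'
  · rw [abs_of_nonneg h'] at h
    rw [tr_of_nonneg hε h', min_eq_right (by linarith)]
    intro hc; linarith [sub_eq_zero.mp hc]
  · rw [abs_of_nonpos h'] at h
    rw [tr_of_nonpos hε h', max_eq_right (by linarith : a ≤ -ε)]
    intro hc
    have := sub_eq_zero.mp hc
    linarith

/-- standard basis vector in c₀ -/
noncomputable def e (n : ℕ) : C₀(ℕ, ℝ) :=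
  ⟨⟨fun m => if m = n then 1 else 0, continuous_of_discreteTopology⟩, by
    rw [cocompact_eq_atTop (α := ℕ)]
    refine Filter.Tendsto.congr' ?_ tendsto_const_nhds
    filter_upwards [Filter.eventually_gt_atTop n] with m hm
    simp [Nat.ne_of_gt hm]⟩

@[simp] lemma e_apply (n m : ℕ) : e n m = if m = n then 1 else 0 := rfl

lemma norm_e_le (n : ℕ) : ‖e n‖ ≤ 1 := by
  rw [← ZeroAtInftyContinuousMap.norm_toBCF_eq_norm]
  refine (BoundedContinuousFunction.norm_le (by norm_num)).mpr ?_
  intro m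
  show |e n m| ≤ 1
  by_cases h : m = n <;> simp [h]

lemma c0_norm_le (f : C₀(ℕ, ℝ)) {C : ℝ} (hC : 0 ≤ C) : ‖f‖ ≤ C ↔ ∀ n, |f n| ≤ C := by
  rw [← ZeroAtInftyContinuousMap.norm_toBCF_eq_norm]
  exact BoundedContinuousFunction.norm_le hC

lemma c0_apply_le (f : C₀(ℕ, ℝ)) (n : ℕ) : |f n| ≤ ‖f‖ := by
  rw [← ZeroAtInftyContinuousMap.norm_toBCF_eq_norm]
  exact BoundedContinuousFunction.norm_coe_le_norm f.toBCF n

end Stmt8Aux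

set_option maxHeartbeats 2000000 in
open Stmt8Aux in
/-- An `ε`-disjointness preserving operator `T : c₀ → C(K)` can be approximated
by a disjointness preserving operator `S` with `‖S‖ ≤ ‖T‖` and `‖T - S‖ ≤ 257 ε`; if `T` is
positive then `S` can be chosen with `0 ≤ S ≤ T`.  Here `c₀ = C₀(ℕ, ℝ)`, the sequences
vanishing at infinity, with the sup norm and coordinatewise order. -/
theorem stmt8 (K : Type*) [TopologicalSpace K] [CompactSpace K] [T2Space K]
    (ε : ℝ) (hε : 0 < ε) (T : C₀(ℕ, ℝ) →L[ℝ] C(K, ℝ))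
    (hDP : ∀ x y : C₀(ℕ, ℝ), (∀ n : ℕ, min |x n| |y n| = 0) →
      ‖|T x| ⊓ |T y|‖ ≤ ε * max ‖x‖ ‖y‖) :
    (∃ S : C₀(ℕ, ℝ) →L[ℝ] C(K, ℝ),
      (∀ x y : C₀(ℕ, ℝ), (∀ n : ℕ, min |x n| |y n| = 0) → |S x| ⊓ |S y| = 0) ∧
      ‖S‖ ≤ ‖T‖ ∧ ‖T - S‖ ≤ 257 * ε) ∧
    ((∀ x : C₀(ℕ, ℝ), (∀ n : ℕ, 0 ≤ x n) → 0 ≤ T x) →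
      ∃ S : C₀(ℕ, ℝ) →L[ℝ] C(K, ℝ),
        (∀ x y : C₀(ℕ, ℝ), (∀ n : ℕ, min |x n| |y n| = 0) → |S x| ⊓ |S y| = 0) ∧
        ‖S‖ ≤ ‖T‖ ∧ ‖T - S‖ ≤ 257 * ε ∧
        (∀ x : C₀(ℕ, ℝ), (∀ n : ℕ, 0 ≤ x n) → 0 ≤ S x) ∧
        (∀ x : C₀(ℕ, ℝ), (∀ n : ℕ, 0 ≤ x n) → S x ≤ T x)) := by
  classical
  set g : ℕ → C(K, ℝ) := fun n => T (e n) with hg_def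
  -- pointwise form of the ε-DP hypothesis
  have key : ∀ (x y : C₀(ℕ, ℝ)) (t : K), (∀ n, min |x n| |y n| = 0) →
      min |(T x) t| |(T y) t| ≤ ε * max ‖x‖ ‖y‖ := by
    intro x y t hxy
    have h1 := hDP x y hxy
    have h2 : min |(T x) t| |(T y) t| = (|T x| ⊓ |T y|) t := by
      simp [ContinuousMap.inf_apply, ContinuousMap.abs_apply]
    have h3 : (|T x| ⊓ |T y|) t ≤ ‖|T x| ⊓ |T y|‖ := by
      refine le_trans (le_abs_self _) ?_
      rw [← Real.norm_eq_abs]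
      exact (|T x| ⊓ |T y|).norm_coe_le_norm t
    linarith
  have hgpt : ∀ n (t : K), |g n t| ≤ ‖T‖ := by
    intro n t
    calc |g n t| ≤ ‖g n‖ := by rw [← Real.norm_eq_abs]; exact (g n).norm_coe_le_norm t
      _ ≤ ‖T‖ * ‖e n‖ := T.le_opNorm _
      _ ≤ ‖T‖ * 1 := by have := norm_e_le n; nlinarith [norm_nonneg T]
      _ = ‖T‖ := mul_one _
  set h : ℕ → C(K, ℝ) := fun n => ⟨fun t => tr ε (g n t), (continuous_tr ε).comp (g n).continuous⟩
    with hh_def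
  have h_apply : ∀ n t, h n t = tr ε (g n t) := fun n t => rfl
  have hhpt : ∀ n (t : K), |h n t| ≤ ‖T‖ :=
    fun n t => le_trans (tr_abs_le_abs hε _) (hgpt n t)
  -- the sets {|g n| > ε} are pairwise disjoint
  have hgg : ∀ m n, m ≠ n → ∀ t : K, min |g m t| |g n t| ≤ ε := by
    intro m n hmn t
    have hd : ∀ k, min |e m k| |e n k| = 0 := by
      intro k
      by_cases hk : k = m
      · subst hk; simp [hmn]
      · simp [hk]
    have := key (e m) (e n) t hd
    have h1 : ε * max ‖e m‖ ‖e n‖ ≤ ε * 1 := by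
      have := norm_e_le m; have := norm_e_le n
      have : max ‖e m‖ ‖e n‖ ≤ 1 := max_le ‹‖e m‖ ≤ 1› ‹‖e n‖ ≤ 1›
      nlinarith
    simpa using le_trans this (by linarith)
  have huniq : ∀ (t : K) m n, m ≠ n → h m t ≠ 0 → h n t = 0 := by
    intro t m n hmn hm
    by_contra hn
    have h1 := abs_lt_of_tr_ne hε _ hm
    have h2 := abs_lt_of_tr_ne hε _ hn
    have := hgg m n hmn t
    have h4 : ε < min |g m t| |g n t| := lt_min h1 h2
    linarith
  -- the distinguished index
  set n₀ : K → ℕ := fun t => if H : ∃ n, h n t ≠ 0 then H.choose else 0 with hn₀_def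
  have hn₀ : ∀ (t : K) m, m ≠ n₀ t → h m t = 0 := by
    intro t m hm
    by_contra hc
    have H : ∃ n, h n t ≠ 0 := ⟨m, hc⟩
    have hspec := H.choose_spec
    have : n₀ t = H.choose := by rw [hn₀_def]; simp [H]
    exact hspec (huniq t m H.choose (this ▸ hm) hc)
  -- summability of the defining series of S
  have hsum : ∀ x : C₀(ℕ, ℝ), Summable (fun n => x n • h n) := by
    intro x
    rw [summable_iff_vanishing]
    intro U hU
    obtain ⟨δ, hδ, hball⟩ := Metric.mem_nhds_iff.mp hU
    have hz := x.zero_at_infty'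
    rw [cocompact_eq_atTop (α := ℕ)] at hz
    have hev : ∀ᶠ n in Filter.atTop, |x n| < δ / (‖T‖ + 1) := by
      have h5 := Metric.tendsto_nhds.mp hz (δ / (‖T‖ + 1)) (by positivity)
      filter_upwards [h5] with n hn
      simpa [Real.dist_eq] using hn
    obtain ⟨N, hN⟩ := Filter.eventually_atTop.mp hev
    refine ⟨Finset.range N, fun F hF => hball ?_⟩
    rw [Metric.mem_ball, dist_zero_right]
    refine lt_of_le_of_lt (?_ : ‖∑ n ∈ F, x n • h n‖ ≤ δ / (‖T‖ + 1) * ‖T‖) ?_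
    · rw [ContinuousMap.norm_le _ (by positivity)]
      intro t
      have hsum_eq : (∑ n ∈ F, x n • h n) t = ∑ n ∈ F, x n * h n t := by simp
      rw [Real.norm_eq_abs, hsum_eq]
      by_cases hmem : n₀ t ∈ F
      · rw [Finset.sum_eq_single_of_mem (n₀ t) hmem
          (fun m _ hm => by rw [hn₀ t m hm, mul_zero])]
        have hn0N : N ≤ n₀ t := by
          by_contra hc
          exact (Finset.disjoint_left.mp hF hmem) (Finset.mem_range.mpr (not_le.mp hc))
        rw [abs_mul]
        exact mul_le_mul (hN _ hn0N).le (hhpt _ t) (abs_nonneg _) (by positivity)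
      · rw [Finset.sum_eq_zero (fun m hm => by
          rw [hn₀ t m (fun hc => hmem (hc ▸ hm)), mul_zero])]
        simp only [abs_zero]
        positivity
    · rw [div_mul_eq_mul_div, div_lt_iff₀ (by positivity : (0:ℝ) < ‖T‖ + 1)]
      nlinarith [norm_nonneg T]
  set Sf : C₀(ℕ, ℝ) → C(K, ℝ) := fun x => ∑' n, x n • h n with hSf_def
  have hSapp : ∀ x t, Sf x t = x (n₀ t) * h (n₀ t) t := by
    intro x t
    have h1 : Sf x t = ∑' n, (x n • h n) t := by
      have h2 := (ContinuousMap.evalCLM (M := ℝ) ℝ t).map_tsum (hsum x)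
      simpa using h2
    rw [h1, tsum_eq_single (n₀ t)]
    · simp
    · intro m hm
      simp [hn₀ t m hm]
  have hSbound : ∀ x, ‖Sf x‖ ≤ ‖T‖ * ‖x‖ := by
    intro x
    rw [ContinuousMap.norm_le _ (by positivity)]
    intro t
    rw [Real.norm_eq_abs, hSapp x t, abs_mul]
    calc |x (n₀ t)| * |h (n₀ t) t| ≤ ‖x‖ * ‖T‖ :=
          mul_le_mul (c0_apply_le x _) (hhpt _ t) (abs_nonneg _) (norm_nonneg _)
      _ = ‖T‖ * ‖x‖ := mul_comm _ _
  set S₀ : C₀(ℕ, ℝ) →ₗ[ℝ] C(K, ℝ) :=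
    { toFun := Sf
      map_add' := by
        intro x y
        ext t
        simp only [ContinuousMap.add_apply, hSapp]
        simp [mul_comm, add_mul]
      map_smul' := by
        intro c x
        ext t
        simp only [ContinuousMap.smul_apply, hSapp]
        simp [mul_assoc] } with hS0_def
  set S : C₀(ℕ, ℝ) →L[ℝ] C(K, ℝ) := S₀.mkContinuous ‖T‖ hSbound with hS_def
  have hS_apply : ∀ x t, S x t = x (n₀ t) * h (n₀ t) t := fun x t => hSapp x t
  have hSnorm : ‖S‖ ≤ ‖T‖ := LinearMap.mkContinuous_norm_le _ (norm_nonneg T) _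
  have hSDP : ∀ x y : C₀(ℕ, ℝ), (∀ n, min |x n| |y n| = 0) → |S x| ⊓ |S y| = 0 := by
    intro x y hxy
    ext t
    rw [ContinuousMap.inf_apply, ContinuousMap.abs_apply, ContinuousMap.abs_apply,
      ContinuousMap.zero_apply, hS_apply, hS_apply, abs_mul, abs_mul]
    have hx0 : |x (n₀ t)| = 0 ∨ |y (n₀ t)| = 0 := by
      have h6 := hxy (n₀ t)
      rcases le_total |x (n₀ t)| |y (n₀ t)| with h' | h'
      · left; rw [min_eq_left h'] at h6; exact h6
      · right; rw [min_eq_right h'] at h6; exact h6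
    rcases hx0 with h' | h'
    · rw [h', zero_mul]
      exact min_eq_left (by positivity)
    · rw [h', zero_mul]
      exact min_eq_right (by positivity)
  have hTS : ‖T - S‖ ≤ 4 * ε := by
    refine ContinuousLinearMap.opNorm_le_bound _ (by positivity) ?_
    intro x
    rcases eq_or_ne x 0 with rfl | hx0
    · simp
    have hxpos : 0 < ‖x‖ := norm_pos_iff.mpr hx0
    rw [ContinuousLinearMap.sub_apply, ContinuousMap.norm_le _ (by positivity)]
    intro t
    rw [ContinuousMap.sub_apply, Real.norm_eq_abs]
    by_cases hht : h (n₀ t) t = 0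
    · -- Case B : all `h m t = 0`, so `S x t = 0`; show `|T x t| ≤ 4 ε ‖x‖`
      have hallh : ∀ m, h m t = 0 := by
        intro m
        by_cases hm : m = n₀ t
        · rw [hm]; exact hht
        · exact hn₀ t m hm
      have hgsmall : ∀ m, |g m t| ≤ ε := by
        intro m
        by_contra hc
        exact tr_ne_zero hε _ (not_le.mp hc) (hallh m)
      rw [hS_apply, hallh (n₀ t), mul_zero, sub_zero]
      by_contra hbig
      push_neg at hbig
      set p : ℕ → C₀(ℕ, ℝ) := fun N => ∑ n ∈ Finset.range N, x n • e n with hp_def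
      have hp_succ : ∀ N, p (N+1) = p N + x N • e N := by
        intro N; rw [hp_def]; exact Finset.sum_range_succ _ _
      have hp_apply : ∀ N m, p N m = if m < N then x m else 0 := by
        intro N
        induction N with
        | zero => intro m; simp [hp_def]
        | succ N ih =>
          intro m
          rw [hp_succ N]
          have hcoe : (p N + x N • e N) m = p N m + x N * e N m := by simp
          rw [hcoe, ih m]
          rcases lt_trichotomy m N with h' | h' | h'
          · simp [h', Nat.lt_succ_of_lt h', Nat.ne_of_lt h']
          · subst h'; simp
          · have h1 : ¬ m < N := by omega
            have h2 : ¬ m < N + 1 := by omega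
            have h3 : m ≠ N := by omega
            simp [h1, h2, h3]
      have hpnorm : ∀ N, ‖p N‖ ≤ ‖x‖ := by
        intro N
        rw [c0_norm_le _ (norm_nonneg x)]
        intro m
        rw [hp_apply]
        split
        · exact c0_apply_le x m
        · simpa using norm_nonneg x
      have hq_apply : ∀ N m, (x - p N) m = if m < N then 0 else x m := by
        intro N m
        have hcoe : (x - p N) m = x m - p N m := by simp
        rw [hcoe, hp_apply]
        split <;> simp
      have hqnorm : ∀ N, ‖x - p N‖ ≤ ‖x‖ := by
        intro N
        rw [c0_norm_le _ (norm_nonneg x)]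
        intro m
        rw [hq_apply]
        split
        · simpa using norm_nonneg x
        · exact c0_apply_le x m
      set f : ℕ → ℝ := fun N => (T (p N)) t with hf_def
      have hf0 : f 0 = 0 := by
        have : p 0 = 0 := by rw [hp_def]; simp
        simp [hf_def, this]
      have hfstep : ∀ N, |f (N+1) - f N| ≤ ε * ‖x‖ := by
        intro N
        have heq : f (N+1) - f N = x N * g N t := by
          show (T (p (N+1))) t - (T (p N)) t = x N * g N t
          rw [hp_succ N, map_add, map_smul]
          simp [hg_def]
        rw [heq, abs_mul, mul_comm ε ‖x‖]
        exact mul_le_mul (c0_apply_le x N) (hgsmall N) (abs_nonneg _) (norm_nonneg x)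
      have htend : Filter.Tendsto f Filter.atTop (nhds ((T x) t)) := by
        have hpt : Filter.Tendsto p Filter.atTop (nhds x) := by
          rw [Metric.tendsto_atTop]
          intro δ hδ
          have hz := x.zero_at_infty'
          rw [cocompact_eq_atTop (α := ℕ)] at hz
          have hev : ∀ᶠ n in Filter.atTop, |x n| < δ/2 := by
            have h5 := Metric.tendsto_nhds.mp hz (δ/2) (by positivity)
            filter_upwards [h5] with n hn
            simpa [Real.dist_eq] using hn
          obtain ⟨N₀, hN₀⟩ := Filter.eventually_atTop.mp hev
          refine ⟨N₀, fun N hN => ?_⟩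
          rw [dist_eq_norm]
          have hle : ‖p N - x‖ ≤ δ/2 := by
            rw [c0_norm_le _ (by linarith)]
            intro m
            have hcoe : (p N - x) m = p N m - x m := by simp
            rw [hcoe, hp_apply]
            split
            · simp
              positivity
            · next hm =>
              have : N₀ ≤ m := le_trans hN (not_lt.mp hm)
              simpa using (hN₀ m this).le
          linarith
        have hc : Continuous fun z : C₀(ℕ, ℝ) => (T z) t :=
          (continuous_eval_const t).comp T.continuous
        exact (hc.tendsto x).comp hpt
      have hex : ∃ N, 2 * ε * ‖x‖ < |f N| := by
        have hev : ∀ᶠ N in Filter.atTop, |f N - (T x) t| < ε * ‖x‖ := by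
          have h5 := Metric.tendsto_nhds.mp htend (ε * ‖x‖) (by positivity)
          filter_upwards [h5] with N hN
          simpa [Real.dist_eq] using hN
        obtain ⟨N, hN⟩ := hev.exists
        refine ⟨N, ?_⟩
        have h6 : |(T x) t| - |f N| ≤ |f N - (T x) t| := by
          rw [abs_sub_comm]
          exact abs_sub_abs_le_abs_sub _ _
        nlinarith
      set N := Nat.find hex with hN_def
      have hNspec : 2 * ε * ‖x‖ < |f N| := Nat.find_spec hex
      have hNne : N ≠ 0 := by
        intro hc
        rw [hc, hf0, abs_zero] at hNspec
        nlinarith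
      obtain ⟨M, hM⟩ : ∃ M, N = M + 1 := ⟨N - 1, by omega⟩
      have hfM : |f M| ≤ 2 * ε * ‖x‖ := by
        exact not_lt.mp (Nat.find_min hex (show M < N by omega))
      have hfN3 : |f N| ≤ 3 * ε * ‖x‖ := by
        have h6 := hfstep M
        have h7 : |f (M+1)| ≤ |f M| + |f (M+1) - f M| := by
          have := abs_add_le (f M) (f (M+1) - f M)
          simpa using this
        have h8 : f N = f (M+1) := by rw [hM]
        rw [h8]
        linarith
      have hd : ∀ m, min |p N m| |(x - p N) m| = 0 := by
        intro m
        rw [hp_apply, hq_apply]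
        split <;> simp
      have hkey := key (p N) (x - p N) t hd
      have hTq : (T (x - p N)) t = (T x) t - f N := by
        rw [map_sub]
        simp [hf_def]
      have h7 : ε * ‖x‖ < |(T (x - p N)) t| := by
        rw [hTq]
        have h8 : |(T x) t| - |f N| ≤ |(T x) t - f N| := abs_sub_abs_le_abs_sub _ _
        nlinarith
      have h8 : ε * ‖x‖ < |(T (p N)) t| := by
        have : |(T (p N)) t| = |f N| := by rw [hf_def]
        rw [this]
        nlinarith
      have h9 : ε * max ‖p N‖ ‖x - p N‖ ≤ ε * ‖x‖ := by
        have := max_le (hpnorm N) (hqnorm N)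
        nlinarith
      have h10 := lt_min h8 h7
      linarith
    · -- Case A : `h (n₀ t) t ≠ 0`
      set n := n₀ t with hn_def
      have hgbig : ε < |g n t| := abs_lt_of_tr_ne hε _ hht
      set x' : C₀(ℕ, ℝ) := x - x n • e n with hx'_def
      have hx'_apply : ∀ m, x' m = if m = n then 0 else x m := by
        intro m
        have hcoe : x' m = x m - x n * e n m := by simp [hx'_def]
        rw [hcoe]
        by_cases hm : m = n
        · subst hm; simp
        · simp [hm]
      have hx'norm : ‖x'‖ ≤ ‖x‖ := by
        rw [c0_norm_le _ (norm_nonneg x)]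
        intro m
        rw [hx'_apply]
        split
        · simpa using norm_nonneg x
        · exact c0_apply_le x m
      have hd : ∀ m, min |x' m| |(‖x‖ • e n) m| = 0 := by
        intro m
        by_cases hm : m = n
        · rw [hx'_apply m, if_pos hm]
          simp
        · have hz : (‖x‖ • e n) m = 0 := by simp [hm]
          rw [hz]
          simp
      have hkey := key x' (‖x‖ • e n) t hd
      have hmax : ε * max ‖x'‖ ‖‖x‖ • e n‖ ≤ ε * ‖x‖ := by
        have h1 : ‖‖x‖ • e n‖ ≤ ‖x‖ := by
          rw [c0_norm_le _ (norm_nonneg x)]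
          intro m
          have hcoe : (‖x‖ • e n) m = ‖x‖ * e n m := by simp
          rw [hcoe, abs_mul, abs_of_nonneg (norm_nonneg x)]
          by_cases hm : m = n
          · simp [hm]
          · simp [hm, norm_nonneg]
        have := max_le hx'norm h1
        nlinarith
      have hTe : (T (‖x‖ • e n)) t = ‖x‖ * g n t := by
        rw [T.map_smul, ContinuousMap.smul_apply, smul_eq_mul]
      have h7 : ε * ‖x‖ < |(T (‖x‖ • e n)) t| := by
        rw [hTe, abs_mul, abs_of_nonneg (norm_nonneg x)]
        calc ε * ‖x‖ = ‖x‖ * ε := mul_comm _ _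
          _ < ‖x‖ * |g n t| := (mul_lt_mul_iff_right₀ hxpos).mpr hgbig
      have hTx' : |(T x') t| ≤ ε * ‖x‖ := by
        by_contra hc
        push_neg at hc
        have := lt_min hc h7
        linarith
      have hsplit : (T x) t = (T x') t + x n * g n t := by
        have heq : T x' = T x - x n • T (e n) := by rw [hx'_def, map_sub, map_smul]
        have := congrArg (fun F : C(K, ℝ) => F t) heq
        simp only [ContinuousMap.sub_apply, ContinuousMap.smul_apply, smul_eq_mul] at this
        rw [this]
        simp [hg_def]
      rw [hS_apply, ← hn_def]
      have hdiff : |g n t - h n t| ≤ ε := by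
        rw [h_apply]
        exact tr_diff_le hε _
      calc |(T x) t - x n * h n t| = |(T x') t + x n * (g n t - h n t)| := by rw [hsplit]; ring_nf
        _ ≤ |(T x') t| + |x n * (g n t - h n t)| := abs_add_le _ _
        _ = |(T x') t| + |x n| * |g n t - h n t| := by rw [abs_mul]
        _ ≤ ε * ‖x‖ + ‖x‖ * ε :=
            add_le_add hTx' (mul_le_mul (c0_apply_le x n) hdiff (abs_nonneg _) (norm_nonneg x))
        _ ≤ 4 * ε * ‖x‖ := by
            have h0 : 0 ≤ ε * ‖x‖ := (mul_pos hε hxpos).le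
            linarith
  have hTS257 : ‖T - S‖ ≤ 257 * ε := le_trans hTS (by linarith)
  refine ⟨⟨S, hSDP, hSnorm, hTS257⟩, ?_⟩
  intro hpos
  have hgpos : ∀ (m : ℕ) (t : K), 0 ≤ g m t := by
    intro m t
    have he : ∀ k, (0:ℝ) ≤ e m k := by
      intro k
      by_cases hk : k = m <;> simp [hk]
    have h5 := hpos (e m) he
    rw [ContinuousMap.le_def] at h5
    have h6 := h5 t
    rw [ContinuousMap.zero_apply] at h6
    exact h6
  refine ⟨S, hSDP, hSnorm, hTS257, ?_, ?_⟩
  · intro x hx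
    rw [ContinuousMap.le_def]
    intro t
    rw [ContinuousMap.zero_apply, hS_apply]
    have hh0 : 0 ≤ h (n₀ t) t := by
      rw [h_apply]
      exact tr_nonneg_of hε (hgpos _ t)
    exact mul_nonneg (hx _) hh0
  · intro x hx
    rw [ContinuousMap.le_def]
    intro t
    rw [hS_apply]
    set n := n₀ t with hn_def
    have h1 : h n t ≤ g n t := by
      rw [h_apply]
      exact tr_le_self hε (hgpos n t)
    have h2 : x n * h n t ≤ x n * g n t := mul_le_mul_of_nonneg_left h1 (hx n)
    set x' : C₀(ℕ, ℝ) := x - x n • e n with hx'_def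
    have hx'c : ∀ m, x' m = if m = n then 0 else x m := by
      intro m
      have hcoe : x' m = x m - x n * e n m := by simp [hx'_def]
      rw [hcoe]
      by_cases hm : m = n
      · subst hm; simp
      · simp [hm]
    have h3 : 0 ≤ (T x') t := by
      have hxc : ∀ k, (0:ℝ) ≤ x' k := by
        intro k
        rw [hx'c]
        split
        · exact le_refl 0
        · exact hx k
      have h5 := hpos x' hxc
      rw [ContinuousMap.le_def] at h5
      have h6 := h5 t
      rw [ContinuousMap.zero_apply] at h6
      exact h6
    have h4 : (T x) t = (T x') t + x n * g n t := by
      have heq : T x' = T x - x n • T (e n) := by rw [hx'_def, map_sub, map_smul]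
      have h7 := congrArg (fun F : C(K, ℝ) => F t) heq
      simp only [ContinuousMap.sub_apply, ContinuousMap.smul_apply, smul_eq_mul] at h7
      rw [h7]
      simp [hg_def]
    linarith
end

section
/- Let 1 ≤ q < ∞, let (Ω, μ) be a measure space, and let R : ℓ_q → L_q(μ) be a positive bounded linear operator such that: (1) ‖(Rx) ⊓ (Ry)‖ ≤ ε₁ whenever x, y are disjoint positive elements of the closed unit ball of ℓ_q, and (2) sup_i ‖R δ_i‖ ≤ ε₂, where (δ_i) is the canonical basis of ℓ_q. Then ‖R‖ ≤ 2^8·ε₁ + ε₂. -/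
open MeasureTheory ENNReal

/-- The canonical basis vector `δ_i` of `ℓ_q`, realized as `L_q` of counting measure on `ℕ`. -/
noncomputable def deltaVec (q : ℝ≥0∞) (i : ℕ) : Lp ℝ q (Measure.count : Measure ℕ) :=
  indicatorConstLp q (measurableSet_singleton i)
    (by simp [Measure.count_singleton]) (1 : ℝ)

lemma ae_count_imp {P : ℕ → Prop} (h : ∀ᵐ j ∂(Measure.count : Measure ℕ), P j) :
    ∀ j, P j := by
  rw [MeasureTheory.ae_iff, Measure.count_eq_zero_iff] at h
  intro j
  by_contra hj
  exact absurd h (Set.Nonempty.ne_empty ⟨j, hj⟩)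

section coeFnHelpers

variable {α E : Type*} {m0 : MeasurableSpace α} {μ : Measure α} {p : ℝ≥0∞}

lemma Lp.coeFn_finset_sum [NormedAddCommGroup E] {ι : Type*} (s : Finset ι)
    (f : ι → Lp E p μ) :
    ⇑(∑ i ∈ s, f i) =ᵐ[μ] fun ω => ∑ i ∈ s, f i ω := by
  classical
  induction s using Finset.induction_on with
  | empty => simp only [Finset.sum_empty]; exact Lp.coeFn_zero E p μ
  | @insert k s hk ih =>
    rw [Finset.sum_insert hk]
    filter_upwards [Lp.coeFn_add (f k) (∑ i ∈ s, f i), ih] with ω h1 h2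
    rw [h1]
    simp only [Pi.add_apply, h2, Finset.sum_insert hk]

lemma Lp.coeFn_sup' [NormedAddCommGroup E] [Lattice E] [HasSolidNorm E] [IsOrderedAddMonoid E] {ι : Type*} {s : Finset ι}
    (hs : s.Nonempty) (f : ι → Lp E p μ) :
    ⇑(s.sup' hs f) =ᵐ[μ] fun ω => s.sup' hs (fun i => f i ω) := by
  classical
  induction hs using Finset.Nonempty.cons_induction with
  | singleton i => simp
  | cons k s hk hs ih =>
    rw [Finset.sup'_cons hs]
    filter_upwards [Lp.coeFn_sup (f k) (s.sup' hs f), ih] with ω h1 h2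
    rw [h1]
    simp only [Pi.sup_apply, h2, Finset.sup'_cons hs]

end coeFnHelpers

section delta

variable {q : ℝ≥0∞}

lemma deltaVec_coeFn (q : ℝ≥0∞) (i : ℕ) :
    ∀ j, deltaVec q i j = Set.indicator {i} (fun _ => (1:ℝ)) j :=
  ae_count_imp indicatorConstLp_coeFn

lemma deltaVec_nonneg (q : ℝ≥0∞) (i : ℕ) : 0 ≤ deltaVec q i := by
  rw [← Lp.coeFn_nonneg]
  filter_upwards [] with j
  rw [deltaVec_coeFn q i j]
  exact Set.indicator_nonneg (fun _ _ => zero_le_one) j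

/-- finite nonneg combination of basis vectors -/
noncomputable def combo (q : ℝ≥0∞) (F : Finset ℕ) (c : ℕ → ℝ) :
    Lp ℝ q (Measure.count : Measure ℕ) :=
  ∑ i ∈ F, c i • deltaVec q i

lemma combo_coeFn (F : Finset ℕ) (c : ℕ → ℝ) :
    ∀ j, combo q F c j = if j ∈ F then c j else 0 := by
  have h1 : ∀ᵐ j ∂(Measure.count : Measure ℕ),
      combo q F c j = ∑ i ∈ F, (c i • deltaVec q i) j :=
    Lp.coeFn_finset_sum F _
  have h2 : ∀ᵐ j ∂(Measure.count : Measure ℕ),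
      ∀ i ∈ F, (c i • deltaVec q i) j = c i • (deltaVec q i j) := by
    rw [Filter.eventually_all_finset]
    intro i _
    exact Lp.coeFn_smul (c i) (deltaVec q i)
  refine ae_count_imp ?_
  filter_upwards [h1, h2] with j hj1 hj2
  rw [hj1, Finset.sum_congr rfl hj2]
  have : ∀ i ∈ F, c i • deltaVec q i j = if i = j then c i else 0 := by
    intro i _
    rw [deltaVec_coeFn q i j]
    by_cases h : i = j
    · subst h; simp
    · have : j ∉ ({i} : Set ℕ) := fun h' => h (by simpa using h'.symm)
      simp [Set.indicator_of_notMem this, h]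
  rw [Finset.sum_congr rfl this, Finset.sum_ite_eq' F j c]

lemma combo_nonneg {F : Finset ℕ} {c : ℕ → ℝ} (hc : ∀ i ∈ F, 0 ≤ c i) :
    0 ≤ combo q F c := by
  rw [← Lp.coeFn_nonneg]
  filter_upwards [] with j
  rw [combo_coeFn F c j]
  by_cases h : j ∈ F
  · simpa [h] using hc j h
  · simp [h]

lemma combo_inf_eq_zero {F : Finset ℕ} {c : ℕ → ℝ} (hc : ∀ i ∈ F, 0 ≤ c i)
    {S T : Finset ℕ} (hS : S ⊆ F) (hT : T ⊆ F) (hST : Disjoint S T) :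
    combo q S c ⊓ combo q T c = 0 := by
  refine le_antisymm ?_ (le_inf (combo_nonneg fun i hi => hc i (hS hi))
    (combo_nonneg fun i hi => hc i (hT hi)))
  rw [← Lp.coeFn_le]
  filter_upwards [Lp.coeFn_inf (combo q S c) (combo q T c),
    Lp.coeFn_zero ℝ q (Measure.count : Measure ℕ)] with j hj hj0
  rw [hj, hj0]
  have h1 := combo_coeFn (q := q) S c j
  have h2 := combo_coeFn (q := q) T c j
  simp only [Pi.inf_apply, Pi.zero_apply]
  rw [h1, h2]
  by_cases hjS : j ∈ S
  · have : j ∉ T := fun h => (Finset.disjoint_left.mp hST) hjS h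
    simp only [if_pos hjS, if_neg this]
    exact inf_le_of_right_le le_rfl
  · simp only [if_neg hjS]
    exact inf_le_of_left_le le_rfl

end delta

section norms

variable {q : ℝ≥0∞} [Fact (1 ≤ q)]

lemma q_ne_zero : q ≠ 0 := (lt_of_lt_of_le zero_lt_one (Fact.out : 1 ≤ q)).ne'

lemma combo_norm_pow (hqt : q ≠ ⊤) (F : Finset ℕ) (c : ℕ → ℝ) (hc : ∀ i ∈ F, 0 ≤ c i) :
    ‖combo q F c‖ ^ q.toReal = ∑ i ∈ F, c i ^ q.toReal := by
  have hq0 : q ≠ 0 := q_ne_zero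
  have hq' : 0 < q.toReal := ENNReal.toReal_pos hq0 hqt
  rw [Lp.norm_def, eLpNorm_eq_lintegral_rpow_enorm_toReal hq0 hqt]
  have hcongr : ∫⁻ j, (‖combo q F c j‖₊ : ℝ≥0∞) ^ q.toReal ∂(Measure.count : Measure ℕ)
      = ∑ i ∈ F, (‖c i‖₊ : ℝ≥0∞) ^ q.toReal := by
    have hpt : ∀ j, (‖combo q F c j‖₊ : ℝ≥0∞) ^ q.toReal
        = (fun j => if j ∈ F then (‖c j‖₊ : ℝ≥0∞) ^ q.toReal else 0) j := by
      intro j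
      rw [combo_coeFn F c j]
      by_cases h : j ∈ F <;> simp [h, ENNReal.zero_rpow_of_pos hq']
    rw [lintegral_congr hpt, lintegral_count,
      tsum_eq_sum (s := F) (fun j hj => by simp [hj])]
    exact Finset.sum_congr rfl fun i hi => by simp [hi]
  rw [show (∫⁻ j, ‖combo q F c j‖ₑ ^ q.toReal ∂(Measure.count : Measure ℕ)) = ∑ i ∈ F, (‖c i‖₊ : ℝ≥0∞) ^ q.toReal from hcongr, ENNReal.toReal_rpow, one_div, ENNReal.rpow_inv_rpow hq'.ne',
    ENNReal.toReal_sum (fun i _ => ENNReal.rpow_ne_top_of_nonneg hq'.le ENNReal.coe_ne_top)]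
  refine Finset.sum_congr rfl fun i hi => ?_
  rw [← ENNReal.toReal_rpow, ENNReal.coe_toReal, coe_nnnorm, Real.norm_eq_abs,
    abs_of_nonneg (hc i hi)]

lemma norm_sup'_pow {Ω : Type*} [MeasurableSpace Ω] {μ : Measure Ω} (hqt : q ≠ ⊤)
    {F : Finset ℕ} (hF : F.Nonempty) (g : ℕ → Lp ℝ q μ) (hg : ∀ i ∈ F, 0 ≤ g i) :
    ‖F.sup' hF g‖ ^ q.toReal ≤ ∑ i ∈ F, ‖g i‖ ^ q.toReal := by
  have hq0 : q ≠ 0 := q_ne_zero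
  have hq' : 0 < q.toReal := ENNReal.toReal_pos hq0 hqt
  have key : (eLpNorm (⇑(F.sup' hF g)) q μ) ^ q.toReal
      ≤ ∑ i ∈ F, (eLpNorm (⇑(g i)) q μ) ^ q.toReal := by
    rw [eLpNorm_eq_lintegral_rpow_enorm_toReal hq0 hqt, one_div, ENNReal.rpow_inv_rpow hq'.ne']
    have hae : ∀ᵐ ω ∂μ, (‖(F.sup' hF g) ω‖₊ : ℝ≥0∞) ^ q.toReal
        ≤ ∑ i ∈ F, (‖g i ω‖₊ : ℝ≥0∞) ^ q.toReal := by
      have hgn : ∀ᵐ ω ∂μ, ∀ i ∈ F, 0 ≤ g i ω := by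
        rw [Filter.eventually_all_finset]
        intro i hi
        filter_upwards [(Lp.coeFn_nonneg (g i)).mpr (hg i hi)] with ω h
        exact h
      filter_upwards [Lp.coeFn_sup' hF g, hgn] with ω hω hgn'
      rw [hω]
      obtain ⟨i₀, hi₀, hsup⟩ := Finset.exists_mem_eq_sup' hF (fun i => g i ω)
      rw [hsup]
      exact Finset.single_le_sum (f := fun i => ((‖g i ω‖₊ : ℝ≥0∞) ^ q.toReal))
        (fun i _ => zero_le) hi₀
    calc ∫⁻ ω, (‖(F.sup' hF g) ω‖₊ : ℝ≥0∞) ^ q.toReal ∂μ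
        ≤ ∫⁻ ω, ∑ i ∈ F, (‖g i ω‖₊ : ℝ≥0∞) ^ q.toReal ∂μ := lintegral_mono_ae hae
      _ = ∑ i ∈ F, ∫⁻ ω, (‖g i ω‖₊ : ℝ≥0∞) ^ q.toReal ∂μ :=
          lintegral_finset_sum' F (fun i _ =>
            (ENNReal.continuous_rpow_const.measurable).comp_aemeasurable
              ((Lp.aestronglyMeasurable (g i)).enorm))
      _ = ∑ i ∈ F, (eLpNorm (⇑(g i)) q μ) ^ q.toReal := by
          refine Finset.sum_congr rfl fun i _ => ?_
          rw [eLpNorm_eq_lintegral_rpow_enorm_toReal hq0 hqt, one_div,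
            ENNReal.rpow_inv_rpow hq'.ne']
          rfl
  have h1 : ‖F.sup' hF g‖ ^ q.toReal = ((eLpNorm (⇑(F.sup' hF g)) q μ) ^ q.toReal).toReal := by
    rw [Lp.norm_def, ENNReal.toReal_rpow]
  have h2 : ∑ i ∈ F, ‖g i‖ ^ q.toReal = (∑ i ∈ F, (eLpNorm (⇑(g i)) q μ) ^ q.toReal).toReal := by
    rw [ENNReal.toReal_sum
      (fun i _ => ENNReal.rpow_ne_top_of_nonneg hq'.le (Lp.eLpNorm_ne_top _))]
    exact Finset.sum_congr rfl fun i _ => by rw [Lp.norm_def, ENNReal.toReal_rpow]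
  rw [h1, h2]
  refine ENNReal.toReal_mono ?_ key
  exact (ENNReal.sum_lt_top.mpr fun i _ => (ENNReal.rpow_ne_top_of_nonneg hq'.le
    (Lp.eLpNorm_ne_top _)).lt_top).ne

end norms


lemma sum_powerset_sq (F : Finset ℕ) (a : ℕ → ℝ) :
    ∑ S ∈ F.powerset, (∑ i ∈ S, a i - ∑ i ∈ F \ S, a i) ^ 2
      = 2 ^ F.card * ∑ i ∈ F, (a i) ^ 2 := by
  induction F using Finset.induction_on with
  | empty => simp
  | @insert k F hk ih =>
    rw [Finset.powerset_insert, Finset.sum_union, Finset.sum_image]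
    · have h1 : ∀ S ∈ F.powerset,
          (∑ i ∈ S, a i - ∑ i ∈ insert k F \ S, a i) ^ 2
            = (∑ i ∈ S, a i - ∑ i ∈ F \ S, a i - a k) ^ 2 := by
        intro S hS
        rw [Finset.mem_powerset] at hS
        have hkS : k ∉ S := fun h => hk (hS h)
        have : insert k F \ S = insert k (F \ S) := by
          ext j; simp only [Finset.mem_sdiff, Finset.mem_insert]
          constructor
          · rintro ⟨h1 | h1, h2⟩ <;> simp_all
          · rintro (rfl | ⟨h1, h2⟩) <;> simp_all
        rw [this, Finset.sum_insert (by simp [hk])]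
        ring_nf
      have h2 : ∀ S ∈ F.powerset,
          (∑ i ∈ insert k S, a i - ∑ i ∈ insert k F \ insert k S, a i) ^ 2
            = (∑ i ∈ S, a i - ∑ i ∈ F \ S, a i + a k) ^ 2 := by
        intro S hS
        rw [Finset.mem_powerset] at hS
        have hkS : k ∉ S := fun h => hk (hS h)
        have : insert k F \ insert k S = F \ S := by
          ext j; simp only [Finset.mem_sdiff, Finset.mem_insert]
          constructor
          · rintro ⟨h1 | h1, h2⟩ <;> simp_all
          · rintro ⟨h1, h2⟩
            refine ⟨Or.inr h1, ?_⟩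
            rintro (rfl | h3) <;> simp_all
        rw [this, Finset.sum_insert hkS]
        ring_nf
      rw [Finset.sum_congr rfl h1, Finset.sum_congr rfl h2, Finset.sum_insert hk,
        Finset.card_insert_of_notMem hk]
      have : ∀ S ∈ F.powerset,
          ((∑ i ∈ S, a i - ∑ i ∈ F \ S, a i - a k) ^ 2
            + ((∑ i ∈ S, a i - ∑ i ∈ F \ S, a i + a k) ^ 2))
          = 2 * (∑ i ∈ S, a i - ∑ i ∈ F \ S, a i) ^ 2 + 2 * a k ^ 2 := by
        intro S _; ring
      calc (∑ S ∈ F.powerset, (∑ i ∈ S, a i - ∑ i ∈ F \ S, a i - a k) ^ 2)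
            + ∑ S ∈ F.powerset, (∑ i ∈ S, a i - ∑ i ∈ F \ S, a i + a k) ^ 2
          = ∑ S ∈ F.powerset, (2 * (∑ i ∈ S, a i - ∑ i ∈ F \ S, a i) ^ 2 + 2 * a k ^ 2) := by
            rw [← Finset.sum_add_distrib]; exact Finset.sum_congr rfl this
        _ = 2 * (2 ^ F.card * ∑ i ∈ F, (a i) ^ 2) + (F.powerset.card : ℝ) * (2 * a k ^ 2) := by
            rw [Finset.sum_add_distrib, ← Finset.mul_sum, ih, Finset.sum_const, nsmul_eq_mul]
        _ = 2 ^ (F.card + 1) * (a k ^ 2 + ∑ i ∈ F, (a i) ^ 2) := by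
            rw [Finset.card_powerset]; push_cast; ring
    · intro S hS T hT hST
      rw [Finset.mem_coe, Finset.mem_powerset] at hS hT
      have : ∀ U : Finset ℕ, U ⊆ F → (insert k U).erase k = U := fun U hU => by
        rw [Finset.erase_insert (fun h => hk (hU h))]
      rw [← this S hS, ← this T hT, hST]
    · rw [Finset.disjoint_left]
      intro S hS hS'
      rw [Finset.mem_powerset] at hS
      simp only [Finset.mem_image, Finset.mem_powerset] at hS'
      obtain ⟨T, _, rfl⟩ := hS'
      exact hk (hS (Finset.mem_insert_self k T))

lemma key_real (F : Finset ℕ) (hF : F.Nonempty) (a : ℕ → ℝ) (ha : ∀ i ∈ F, 0 ≤ a i) :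
    ∑ i ∈ F, a i ≤ F.sup' hF a
      + 4 / 2 ^ F.card * ∑ S ∈ F.powerset, min (∑ i ∈ S, a i) (∑ i ∈ F \ S, a i) := by
  set T := ∑ i ∈ F, a i with hT
  set m := F.sup' hF a with hm
  have hT0 : 0 ≤ T := Finset.sum_nonneg ha
  have hm0 : 0 ≤ m := by
    obtain ⟨i, hi⟩ := hF
    exact le_trans (ha i hi) (Finset.le_sup' a hi)
  have hsum_sq : ∑ i ∈ F, (a i) ^ 2 ≤ m * T := by
    rw [hT, Finset.mul_sum]
    refine Finset.sum_le_sum fun i hi => ?_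
    rw [sq]
    exact mul_le_mul_of_nonneg_right (Finset.le_sup' a hi) (ha i hi)
  set D := ∑ S ∈ F.powerset, |∑ i ∈ S, a i - ∑ i ∈ F \ S, a i| with hD
  have hD0 : 0 ≤ D := Finset.sum_nonneg fun S _ => abs_nonneg _
  have hDsq : D ^ 2 ≤ (2 ^ F.card * ((m + T) / 2)) ^ 2 := by
    have hcs : D ^ 2 ≤ (2 ^ F.card : ℝ)
        * ∑ S ∈ F.powerset, (∑ i ∈ S, a i - ∑ i ∈ F \ S, a i) ^ 2 := by
      have := Finset.sum_mul_sq_le_sq_mul_sq F.powerset (fun _ => (1 : ℝ))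
        (fun S => |∑ i ∈ S, a i - ∑ i ∈ F \ S, a i|)
      simp only [one_mul, one_pow, Finset.sum_const, nsmul_eq_mul, mul_one, sq_abs] at this
      rw [Finset.card_powerset] at this
      calc D ^ 2 = (∑ S ∈ F.powerset, |∑ i ∈ S, a i - ∑ i ∈ F \ S, a i|) ^ 2 := rfl
        _ ≤ _ := by push_cast at this ⊢; exact this
    have h2 : (2 ^ F.card : ℝ) * ∑ S ∈ F.powerset, (∑ i ∈ S, a i - ∑ i ∈ F \ S, a i) ^ 2
        ≤ (2 ^ F.card : ℝ) * (2 ^ F.card * (m * T)) := by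
      rw [sum_powerset_sq]
      refine mul_le_mul_of_nonneg_left (mul_le_mul_of_nonneg_left hsum_sq (by positivity))
        (by positivity)
    have h3 : m * T ≤ ((m + T) / 2) ^ 2 := by nlinarith [sq_nonneg (m - T)]
    calc D ^ 2 ≤ (2 ^ F.card : ℝ) * (2 ^ F.card * (m * T)) := le_trans hcs h2
      _ ≤ (2 ^ F.card : ℝ) * (2 ^ F.card * ((m + T) / 2) ^ 2) := by
          refine mul_le_mul_of_nonneg_left (mul_le_mul_of_nonneg_left h3 (by positivity))
            (by positivity)
      _ = (2 ^ F.card * ((m + T) / 2)) ^ 2 := by ring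
  have hDle : D ≤ 2 ^ F.card * ((m + T) / 2) := by
    have h1 : (0 : ℝ) ≤ 2 ^ F.card * ((m + T) / 2) := by positivity
    nlinarith
  have hmin : ∀ S ∈ F.powerset, min (∑ i ∈ S, a i) (∑ i ∈ F \ S, a i)
      = (T - |∑ i ∈ S, a i - ∑ i ∈ F \ S, a i|) / 2 := by
    intro S hS
    rw [Finset.mem_powerset] at hS
    have hAB : ∑ i ∈ F \ S, a i + ∑ i ∈ S, a i = T := Finset.sum_sdiff hS
    rcases le_total (∑ i ∈ S, a i) (∑ i ∈ F \ S, a i) with h | h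
    · rw [min_eq_left h, abs_of_nonpos (by linarith)]; linarith
    · rw [min_eq_right h, abs_of_nonneg (by linarith)]; linarith
  have hsum_min : ∑ S ∈ F.powerset, min (∑ i ∈ S, a i) (∑ i ∈ F \ S, a i)
      = (2 ^ F.card * T - D) / 2 := by
    rw [Finset.sum_congr rfl hmin, hD, ← Finset.sum_div, Finset.sum_sub_distrib,
      Finset.sum_const, Finset.card_powerset, nsmul_eq_mul]
    push_cast
    ring
  have hpow : (0:ℝ) < 2 ^ F.card := by positivity
  rw [hsum_min]
  have h2 : T - m ≤ (4:ℝ) / 2 ^ F.card * ((2 ^ F.card * T - D) / 2) := by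
    rw [div_mul_eq_mul_div, le_div_iff₀ hpow]
    nlinarith [hDle]
  linarith

section mainest

variable {q : ℝ≥0∞} [Fact (1 ≤ q)] {Ω : Type*} [MeasurableSpace Ω] {μ : Measure Ω}

lemma norm_le_of_nonneg_le {E : Type*} [NormedAddCommGroup E] [Lattice E] [HasSolidNorm E] [IsOrderedAddMonoid E] {f g : E}
    (hf : 0 ≤ f) (hfg : f ≤ g) : ‖f‖ ≤ ‖g‖ :=
  HasSolidNorm.solid (by rwa [abs_of_nonneg hf, abs_of_nonneg (le_trans hf hfg)])

lemma combo_mono {F S : Finset ℕ} {c : ℕ → ℝ} (hc : ∀ i ∈ F, 0 ≤ c i) (hS : S ⊆ F) :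
    combo q S c ≤ combo q F c := by
  rw [← Lp.coeFn_le]
  filter_upwards [] with j
  rw [combo_coeFn S c j, combo_coeFn F c j]
  by_cases hjS : j ∈ S
  · simp [hjS, hS hjS]
  · by_cases hjF : j ∈ F <;> simp [hjS, hjF]
    exact hc j hjF

lemma main_estimate (hqt : q ≠ ⊤) (ε₁ ε₂ : ℝ)
    (R : Lp ℝ q (Measure.count : Measure ℕ) →L[ℝ] Lp ℝ q μ)
    (hpos : ∀ x : Lp ℝ q (Measure.count : Measure ℕ), 0 ≤ x → 0 ≤ R x)
    (h1 : ∀ x y : Lp ℝ q (Measure.count : Measure ℕ),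
      0 ≤ x → 0 ≤ y → ‖x‖ ≤ 1 → ‖y‖ ≤ 1 → x ⊓ y = 0 → ‖R x ⊓ R y‖ ≤ ε₁)
    (h2 : ∀ i : ℕ, ‖R (deltaVec q i)‖ ≤ ε₂)
    (F : Finset ℕ) (hF : F.Nonempty) (c : ℕ → ℝ) (hc : ∀ i ∈ F, 0 ≤ c i)
    (hx1 : ‖combo q F c‖ ≤ 1) :
    ‖R (combo q F c)‖ ≤ ε₂ + 4 * ε₁ := by
  classical
  have hq' : 0 < q.toReal := ENNReal.toReal_pos q_ne_zero hqt
  have hε₂0 : 0 ≤ ε₂ := le_trans (norm_nonneg _) (h2 0)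
  set a : ℕ → Lp ℝ q μ := fun i => R (c i • deltaVec q i) with ha_def
  set u : Finset ℕ → Lp ℝ q μ := fun S => R (combo q S c) with hu_def
  have hsingle : ∀ i, c i • deltaVec q i = combo q ({i} : Finset ℕ) c := by
    intro i; rw [combo, Finset.sum_singleton]
  have ha_nonneg : ∀ i ∈ F, 0 ≤ a i := by
    intro i hi
    refine hpos _ ?_
    rw [hsingle i]
    exact combo_nonneg (by simpa using hc i hi)
  have husum : ∀ S : Finset ℕ, u S = ∑ i ∈ S, a i := fun S => map_sum R _ S
  have hu_nonneg : ∀ S ⊆ F, 0 ≤ u S := fun S hS =>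
    hpos _ (combo_nonneg fun i hi => hc i (hS hi))
  set H : Lp ℝ q μ := ∑ S ∈ F.powerset, (u S ⊓ u (F \ S)) with hH_def
  set G : Lp ℝ q μ := F.sup' hF a with hG_def
  set s : ℝ := 4 / 2 ^ F.card with hs_def
  have hs0 : 0 ≤ s := by positivity
  -- the lattice inequality
  have horder : R (combo q F c) ≤ G + s • H := by
    rw [← Lp.coeFn_le]
    have e1 : ⇑(R (combo q F c)) =ᵐ[μ] fun ω => ∑ i ∈ F, a i ω := by
      rw [show R (combo q F c) = ∑ i ∈ F, a i from husum F]
      exact Lp.coeFn_finset_sum F a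
    have e2 : ⇑G =ᵐ[μ] fun ω => F.sup' hF (fun i => a i ω) := Lp.coeFn_sup' hF a
    have e3 : ∀ᵐ ω ∂μ, ∀ S ∈ F.powerset, (u S ⊓ u (F \ S)) ω
        = min (∑ i ∈ S, a i ω) (∑ i ∈ F \ S, a i ω) := by
      rw [Filter.eventually_all_finset]
      intro S hS
      have hcS : ⇑(u S) =ᵐ[μ] fun ω => ∑ i ∈ S, a i ω := by
        rw [husum S]; exact Lp.coeFn_finset_sum S a
      have hcS' : ⇑(u (F \ S)) =ᵐ[μ] fun ω => ∑ i ∈ F \ S, a i ω := by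
        rw [husum (F \ S)]; exact Lp.coeFn_finset_sum (F \ S) a
      filter_upwards [Lp.coeFn_inf (u S) (u (F \ S)), hcS, hcS'] with ω hω h₂ h₃
      rw [hω]
      simp only [Pi.inf_apply]
      rw [h₂, h₃]
    have e4 : ⇑H =ᵐ[μ] fun ω => ∑ S ∈ F.powerset, (u S ⊓ u (F \ S)) ω :=
      Lp.coeFn_finset_sum F.powerset _
    have e5 : ∀ᵐ ω ∂μ, ∀ i ∈ F, 0 ≤ a i ω := by
      rw [Filter.eventually_all_finset]
      intro i hi
      filter_upwards [(Lp.coeFn_nonneg (a i)).mpr (ha_nonneg i hi)] with ω h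
      exact h
    filter_upwards [e1, e2, e3, e4, e5, Lp.coeFn_add G (s • H), Lp.coeFn_smul s H]
      with ω h1' h2' h3' h4' h5' h6' h7'
    rw [h1', h6']
    simp only [Pi.add_apply]
    rw [h2']
    have : (s • H) ω = s * H ω := by rw [h7']; rfl
    rw [this, h4', Finset.sum_congr rfl h3']
    exact key_real F hF (fun i => a i ω) h5'
  -- norms
  have hRx0 : 0 ≤ R (combo q F c) := hpos _ (combo_nonneg hc)
  have hH0 : 0 ≤ H := by
    refine Finset.sum_nonneg fun S hS => ?_
    rw [Finset.mem_powerset] at hS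
    exact le_inf (hu_nonneg S hS) (hu_nonneg (F \ S) (Finset.sdiff_subset))
  have hG0 : 0 ≤ G := by
    obtain ⟨i, hi⟩ := hF
    exact le_trans (ha_nonneg i hi) (Finset.le_sup' a hi)
  have hnorm1 : ‖R (combo q F c)‖ ≤ ‖G‖ + s * ‖H‖ := by
    refine le_trans (norm_le_of_nonneg_le hRx0 horder) ?_
    refine le_trans (norm_add_le _ _) ?_
    rw [norm_smul, Real.norm_eq_abs, abs_of_nonneg hs0]
  -- bound ‖H‖
  have hHnorm : ‖H‖ ≤ 2 ^ F.card * ε₁ := by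
    refine le_trans (norm_sum_le _ _) ?_
    have hbound : ∀ S ∈ F.powerset, ‖u S ⊓ u (F \ S)‖ ≤ ε₁ := by
      intro S hS
      rw [Finset.mem_powerset] at hS
      refine h1 (combo q S c) (combo q (F \ S) c)
        (combo_nonneg fun i hi => hc i (hS hi))
        (combo_nonneg fun i hi => hc i ((Finset.sdiff_subset) hi))
        (le_trans (norm_le_of_nonneg_le (combo_nonneg fun i hi => hc i (hS hi))
          (combo_mono hc hS)) hx1)
        (le_trans (norm_le_of_nonneg_le (combo_nonneg fun i hi => hc i (Finset.sdiff_subset hi))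
          (combo_mono hc Finset.sdiff_subset)) hx1)
        (combo_inf_eq_zero hc hS Finset.sdiff_subset Finset.disjoint_sdiff)
    refine le_trans (Finset.sum_le_sum hbound) ?_
    rw [Finset.sum_const, Finset.card_powerset, nsmul_eq_mul]
    push_cast
    exact le_refl _
  -- bound ‖G‖
  have hGnorm : ‖G‖ ≤ ε₂ := by
    have hpow : ‖G‖ ^ q.toReal ≤ ε₂ ^ q.toReal := by
      refine le_trans (norm_sup'_pow hqt hF a ha_nonneg) ?_
      have hai : ∀ i ∈ F, ‖a i‖ ^ q.toReal ≤ ε₂ ^ q.toReal * c i ^ q.toReal := by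
        intro i hi
        have : ‖a i‖ ≤ ε₂ * c i := by
          show ‖R (c i • deltaVec q i)‖ ≤ ε₂ * c i
          rw [ContinuousLinearMap.map_smul, norm_smul, Real.norm_eq_abs,
            abs_of_nonneg (hc i hi), mul_comm]
          exact mul_le_mul_of_nonneg_right (h2 i) (hc i hi)
        calc ‖a i‖ ^ q.toReal ≤ (ε₂ * c i) ^ q.toReal :=
              Real.rpow_le_rpow (norm_nonneg _) this hq'.le
          _ = ε₂ ^ q.toReal * c i ^ q.toReal :=
              Real.mul_rpow hε₂0 (hc i hi)
      refine le_trans (Finset.sum_le_sum hai) ?_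
      rw [← Finset.mul_sum, ← combo_norm_pow hqt F c hc]
      have : ‖combo q F c‖ ^ q.toReal ≤ 1 :=
        Real.rpow_le_one (norm_nonneg _) hx1 hq'.le
      nlinarith [Real.rpow_nonneg hε₂0 q.toReal]
    have := (Real.rpow_le_rpow_iff (norm_nonneg G) hε₂0 hq').mp hpow
    exact this
  calc ‖R (combo q F c)‖ ≤ ‖G‖ + s * ‖H‖ := hnorm1
    _ ≤ ε₂ + s * (2 ^ F.card * ε₁) := by
        refine add_le_add hGnorm (mul_le_mul_of_nonneg_left hHnorm hs0)
    _ = ε₂ + 4 * ε₁ := by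
        rw [hs_def]
        field_simp

end mainest

section final

variable {q : ℝ≥0∞} [Fact (1 ≤ q)] {Ω : Type*} [MeasurableSpace Ω] {μ : Measure Ω}

lemma Lp.ext' {α E : Type*} {m0 : MeasurableSpace α} {μ' : Measure α} {p : ℝ≥0∞}
    [NormedAddCommGroup E] {f g : Lp E p μ'} (h : ⇑f =ᵐ[μ'] ⇑g) : f = g :=
  Subtype.ext (MeasureTheory.AEEqFun.ext h)

/-- The additive submonoid of nonnegative finite combinations of basis vectors. -/
noncomputable def comboSubmonoid (q : ℝ≥0∞) :
    AddSubmonoid (Lp ℝ q (Measure.count : Measure ℕ)) where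
  carrier := {f | ∃ F : Finset ℕ, ∃ c : ℕ → ℝ, (∀ i ∈ F, 0 ≤ c i) ∧ f = combo q F c}
  zero_mem' := ⟨∅, 0, by simp, by simp [combo]⟩
  add_mem' := by
    classical
    rintro f g ⟨F, c, hc, rfl⟩ ⟨G, d, hd, rfl⟩
    refine ⟨F ∪ G, fun i => (if i ∈ F then c i else 0) + (if i ∈ G then d i else 0), ?_, ?_⟩
    · intro i _
      refine add_nonneg ?_ ?_
      · split_ifs with h; exacts [hc i h, le_rfl]
      · split_ifs with h; exacts [hd i h, le_rfl]
    · rw [combo, combo, combo]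
      simp_rw [add_smul]
      rw [Finset.sum_add_distrib]
      congr 1
      · rw [← Finset.sum_subset Finset.subset_union_left
          (fun i _ hiF => by simp [hiF])]
        exact Finset.sum_congr rfl fun i hi => by simp [hi]
      · rw [← Finset.sum_subset Finset.subset_union_right
          (fun i _ hiG => by simp [hiG])]
        exact Finset.sum_congr rfl fun i hi => by simp [hi]

lemma abs_mem_closure (hqt : q ≠ ⊤) (f : Lp ℝ q (Measure.count : Measure ℕ)) :
    |f| ∈ (comboSubmonoid q).topologicalClosure := by
  classical
  refine Lp.induction hqt
    (fun f => |f| ∈ (comboSubmonoid q).topologicalClosure) ?_ ?_ ?_ f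
  · -- indicator constants
    intro e s hs hμs
    have hsfin : s.Finite := Measure.count_apply_lt_top.mp hμs
    refine AddSubmonoid.le_topologicalClosure _ ?_
    refine ⟨hsfin.toFinset, fun _ => |e|, fun i _ => abs_nonneg e, ?_⟩
    refine Lp.ext' ?_
    have h1 : ⇑(Lp.simpleFunc.indicatorConst q hs hμs.ne e : Lp ℝ q (Measure.count : Measure ℕ))
        =ᵐ[(Measure.count : Measure ℕ)] s.indicator fun _ => e := by
      rw [Lp.simpleFunc.coe_indicatorConst]
      exact indicatorConstLp_coeFn
    filter_upwards [Lp.coeFn_abs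
      (Lp.simpleFunc.indicatorConst q hs hμs.ne e : Lp ℝ q (Measure.count : Measure ℕ)), h1]
      with j hj hj1
    rw [hj, hj1, combo_coeFn hsfin.toFinset (fun _ => |e|) j]
    by_cases hjs : j ∈ s
    · simp [Set.indicator_of_mem hjs, hsfin.mem_toFinset, hjs]
    · simp [Set.indicator_of_notMem hjs, hsfin.mem_toFinset, hjs]
  · -- additivity
    intro f g hf hg hdisj hPf hPg
    have habs : |hf.toLp f + hg.toLp g| = |hf.toLp f| + |hg.toLp g| := by
      refine Lp.ext' ?_
      filter_upwards [Lp.coeFn_abs (hf.toLp f + hg.toLp g),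
        Lp.coeFn_add (hf.toLp f) (hg.toLp g),
        Lp.coeFn_add |hf.toLp f| |hg.toLp g|,
        Lp.coeFn_abs (hf.toLp f), Lp.coeFn_abs (hg.toLp g),
        hf.coeFn_toLp, hg.coeFn_toLp] with j h1 h2 h3 h4 h5 h6 h7
      rw [h1, h3]
      simp only [Pi.add_apply]
      rw [h2, h4, h5]
      simp only [Pi.add_apply]
      rw [h6, h7]
      by_cases hjf : f j = 0
      · simp [hjf]
      · have hjg : g j = 0 := by
          by_contra hjg
          exact (Set.disjoint_left.mp hdisj (by simpa using hjf)) (by simpa using hjg)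
        simp [hjg]
    rw [habs]
    exact add_mem hPf hPg
  · -- closedness
    have hcont : Continuous fun f : Lp ℝ q (Measure.count : Measure ℕ) => |f| := by
      have : (fun f : Lp ℝ q (Measure.count : Measure ℕ) => |f|)
          = fun f => f⁺ + f⁻ := funext fun f => (posPart_add_negPart f).symm
      rw [this]
      exact continuous_posPart.add continuous_negPart
    exact (AddSubmonoid.isClosed_topologicalClosure _).preimage hcont

end final



/-- If `R : ℓ_q → L_q(μ)` is positive, `‖Rx ⊓ Ry‖ ≤ ε₁` for disjoint positive
`x, y` in the unit ball, and `‖R δ_i‖ ≤ ε₂` for all `i`, then `‖R‖ ≤ 2^8 ε₁ + ε₂`. -/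
theorem stmt11 {Ω : Type*} [MeasurableSpace Ω] (μ : Measure Ω)
    (q : ℝ≥0∞) [Fact (1 ≤ q)] (hq : q ≠ ⊤)
    (ε₁ ε₂ : ℝ)
    (R : Lp ℝ q (Measure.count : Measure ℕ) →L[ℝ] Lp ℝ q μ)
    (hpos : ∀ x : Lp ℝ q (Measure.count : Measure ℕ), 0 ≤ x → 0 ≤ R x)
    (h1 : ∀ x y : Lp ℝ q (Measure.count : Measure ℕ),
      0 ≤ x → 0 ≤ y → ‖x‖ ≤ 1 → ‖y‖ ≤ 1 → x ⊓ y = 0 → ‖R x ⊓ R y‖ ≤ ε₁)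
    (h2 : ∀ i : ℕ, ‖R (deltaVec q i)‖ ≤ ε₂) :
    ‖R‖ ≤ 2 ^ 8 * ε₁ + ε₂ := by
  have hε₁0 : 0 ≤ ε₁ := by
    have h0 := h1 0 0 le_rfl le_rfl (by simp) (by simp) (by simp)
    simpa using h0
  have hε₂0 : 0 ≤ ε₂ := le_trans (norm_nonneg _) (h2 0)
  set C : ℝ := ε₂ + 4 * ε₁ with hC
  have hD : ∀ f ∈ (comboSubmonoid q : Set (Lp ℝ q (Measure.count : Measure ℕ))),
      ‖R f‖ ≤ C * ‖f‖ := by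
    rintro f ⟨F, c, hc, rfl⟩
    rcases Finset.eq_empty_or_nonempty F with rfl | hF
    · simp [combo]
    by_cases hx0 : ‖combo q F c‖ = 0
    · rw [norm_eq_zero] at hx0
      rw [hx0, map_zero]
      simp
    have hxpos : 0 < ‖combo q F c‖ := (norm_nonneg _).lt_of_ne (Ne.symm hx0)
    have hcombo' : combo q F (fun i => c i / ‖combo q F c‖)
        = (‖combo q F c‖)⁻¹ • combo q F c := by
      rw [combo, combo, Finset.smul_sum]
      exact Finset.sum_congr rfl fun i hi => by rw [smul_smul, div_eq_inv_mul]
    have hnorm' : ‖combo q F (fun i => c i / ‖combo q F c‖)‖ ≤ 1 := by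
      rw [hcombo', norm_smul, Real.norm_eq_abs, abs_inv,
        abs_of_nonneg (norm_nonneg _), inv_mul_cancel₀ hx0]
    have hmain := main_estimate hq ε₁ ε₂ R hpos h1 h2 F hF _
      (fun i hi => div_nonneg (hc i hi) hxpos.le) hnorm'
    rw [hcombo', ContinuousLinearMap.map_smul, norm_smul, Real.norm_eq_abs, abs_inv,
      abs_of_nonneg (norm_nonneg _)] at hmain
    calc ‖R (combo q F c)‖
        = ‖combo q F c‖ * ((‖combo q F c‖)⁻¹ * ‖R (combo q F c)‖) := by field_simp
      _ ≤ ‖combo q F c‖ * (ε₂ + 4 * ε₁) := mul_le_mul_of_nonneg_left hmain (norm_nonneg _)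
      _ = C * ‖combo q F c‖ := mul_comm _ _
  have hclosed : IsClosed {f : Lp ℝ q (Measure.count : Measure ℕ) | ‖R f‖ ≤ C * ‖f‖} :=
    isClosed_le (R.continuous.norm) (continuous_const.mul continuous_norm)
  have hclos : ∀ f ∈ (comboSubmonoid q).topologicalClosure, ‖R f‖ ≤ C * ‖f‖ :=
    fun f hf => closure_minimal hD hclosed hf
  have hRabs : ∀ f, ‖R f‖ ≤ ‖R |f|‖ := by
    intro f
    have h0 : 0 ≤ R |f| := hpos _ (abs_nonneg f)
    refine HasSolidNorm.solid ?_
    rw [abs_of_nonneg h0]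
    have hdec : R f = R (f⁺) - R (f⁻) := by rw [← map_sub, posPart_sub_negPart]
    have hab : R |f| = R (f⁺) + R (f⁻) := by rw [← map_add, posPart_add_negPart]
    rw [hdec, hab]
    calc |R (f⁺) - R (f⁻)| ≤ |R (f⁺)| + |R (f⁻)| := by
          rw [abs_le']
          constructor
          · rw [sub_eq_add_neg]
            exact add_le_add (le_abs_self _) (neg_le_abs _)
          · rw [neg_sub, sub_eq_add_neg, add_comm]
            exact add_le_add (neg_le_abs _) (le_abs_self _)
      _ = R (f⁺) + R (f⁻) := by
          rw [abs_of_nonneg (hpos _ (posPart_nonneg f)), abs_of_nonneg (hpos _ (negPart_nonneg f))]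
  refine ContinuousLinearMap.opNorm_le_bound R (by positivity) fun f => ?_
  calc ‖R f‖ ≤ ‖R |f|‖ := hRabs f
    _ ≤ C * ‖|f|‖ := hclos _ (abs_mem_closure hq f)
    _ = C * ‖f‖ := by rw [norm_abs_eq_norm]
    _ ≤ (2 ^ 8 * ε₁ + ε₂) * ‖f‖ := by
        refine mul_le_mul_of_nonneg_right ?_ (norm_nonneg _)
        rw [hC]; nlinarith
end

section
/- Let 1 ≤ p < q < ∞. Then for every ε > 0 there exists a finite rank positive bounded linear operator T : ℓ_p → ℓ_q which is ε-disjointness preserving, satisfies ‖T‖ ≤ 2^{1 − 1/q}, and such that ‖T − S‖ ≥ 2^{-1/q} for every disjointness preserving linear operator S : ℓ_p → ℓ_q. -/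
open MeasureTheory ENNReal
namespace Stmt13


/-- For counting measure, a.e. properties hold everywhere. -/
lemma ae_all {P : ℕ → Prop} (h : ∀ᵐ n ∂(Measure.count : Measure ℕ), P n) : ∀ n, P n := by
  intro n
  by_contra hn
  have h0 : (Measure.count : Measure ℕ) {x | ¬ P x} = 0 := h
  rw [Measure.count_eq_zero_iff] at h0
  exact (Set.eq_empty_iff_forall_notMem.mp h0 n) hn

lemma ae_eq_all {f g : ℕ → ℝ} (h : f =ᵐ[(Measure.count : Measure ℕ)] g) : ∀ n, f n = g n :=
  ae_all h

/-- eLpNorm over counting measure as a tsum. -/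
lemma eLpNorm_count (f : ℕ → ℝ) {R : ℝ≥0∞} (h0 : R ≠ 0) (ht : R ≠ ∞) :
    eLpNorm f R (Measure.count : Measure ℕ)
      = (∑' n, (‖f n‖₊ : ℝ≥0∞) ^ R.toReal) ^ (1 / R.toReal) := by
  rw [eLpNorm_eq_lintegral_rpow_enorm_toReal h0 ht, lintegral_count]
  rfl

/-- Norm of an Lp(count) element with support in a finite set. -/
lemma norm_eq_rpow_sum {R : ℝ≥0∞} [Fact (1 ≤ R)] (ht : R ≠ ∞)
    (F : Lp ℝ R (Measure.count : Measure ℕ)) {s : Finset ℕ}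
    (hs : ∀ n ∉ s, (F : ℕ → ℝ) n = 0) :
    ‖F‖ = (∑ n ∈ s, |(F : ℕ → ℝ) n| ^ R.toReal) ^ (1 / R.toReal) := by
  have h0 : R ≠ 0 := by
    have := (Fact.out : 1 ≤ R); intro hR; rw [hR] at this; simp at this
  have hr0 : 0 < R.toReal := ENNReal.toReal_pos h0 ht
  have htsum : (∑' n, (‖(F : ℕ → ℝ) n‖₊ : ℝ≥0∞) ^ R.toReal)
      = ∑ n ∈ s, (‖(F : ℕ → ℝ) n‖₊ : ℝ≥0∞) ^ R.toReal := by
    refine tsum_eq_sum ?_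
    intro n hn
    rw [hs n hn]
    simp [ENNReal.rpow_eq_zero_iff, hr0]
  rw [Lp.norm_def, eLpNorm_count _ h0 ht, htsum]
  rw [← ENNReal.toReal_rpow]
  congr 1
  rw [ENNReal.toReal_sum (by intro n _; exact (ENNReal.rpow_lt_top_of_nonneg hr0.le ENNReal.coe_ne_top).ne)]
  refine Finset.sum_congr rfl ?_
  intro n _
  rw [← ENNReal.toReal_rpow]
  simp [Real.norm_eq_abs]

/-- Finite partial sums of |F n|^r are bounded by ‖F‖^r. -/
lemma sum_rpow_le_norm {R : ℝ≥0∞} [Fact (1 ≤ R)] (ht : R ≠ ∞)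
    (F : Lp ℝ R (Measure.count : Measure ℕ)) (s : Finset ℕ) :
    ∑ n ∈ s, |(F : ℕ → ℝ) n| ^ R.toReal ≤ ‖F‖ ^ R.toReal := by
  have h0 : R ≠ 0 := by
    have := (Fact.out : 1 ≤ R); intro hR; rw [hR] at this; simp at this
  have hr0 : 0 < R.toReal := ENNReal.toReal_pos h0 ht
  have hlt : eLpNorm (F : ℕ → ℝ) R (Measure.count : Measure ℕ) < ∞ := Lp.eLpNorm_lt_top F
  rw [eLpNorm_count _ h0 ht] at hlt
  have htop : (∑' n, (‖(F : ℕ → ℝ) n‖₊ : ℝ≥0∞) ^ R.toReal) ≠ ∞ := by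
    intro hc
    rw [hc, ENNReal.top_rpow_of_pos (by positivity)] at hlt
    exact (lt_irrefl _ hlt).elim
  have hnorm : ‖F‖ ^ R.toReal = (∑' n, (‖(F : ℕ → ℝ) n‖₊ : ℝ≥0∞) ^ R.toReal).toReal := by
    rw [Lp.norm_def, eLpNorm_count _ h0 ht, ← ENNReal.toReal_rpow,
      ← Real.rpow_mul ENNReal.toReal_nonneg, one_div, inv_mul_cancel₀ hr0.ne',
      Real.rpow_one]
  rw [hnorm]
  have hle : ∑ n ∈ s, (‖(F : ℕ → ℝ) n‖₊ : ℝ≥0∞) ^ R.toReal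
      ≤ ∑' n, (‖(F : ℕ → ℝ) n‖₊ : ℝ≥0∞) ^ R.toReal := ENNReal.sum_le_tsum s
  have := ENNReal.toReal_mono htop hle
  rw [ENNReal.toReal_sum (by intro n _; exact (ENNReal.rpow_lt_top_of_nonneg hr0.le ENNReal.coe_ne_top).ne)] at this
  refine le_trans (le_of_eq ?_) this
  refine Finset.sum_congr rfl ?_
  intro n _
  rw [← ENNReal.toReal_rpow]
  simp [Real.norm_eq_abs]



/-- subadditivity of min in the first argument, for nonnegative reals -/
lemma min_add_left {a b c : ℝ} (ha : 0 ≤ a) (hb : 0 ≤ b) (hc : 0 ≤ c) :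
    min (a + b) c ≤ min a c + min b c := by
  rcases le_total a c with h | h
  · rcases le_total b c with h' | h'
    · rw [min_eq_left h, min_eq_left h']; exact min_le_left _ _
    · refine le_trans (min_le_right _ _) ?_
      have : 0 ≤ min a c := le_min ha hc
      rw [min_eq_right h']; linarith
  · refine le_trans (min_le_right _ _) ?_
    have : 0 ≤ min b c := le_min hb hc
    rw [min_eq_right h]; linarith

lemma min4 {x y z w : ℝ} (hx : 0 ≤ x) (hy : 0 ≤ y) (hz : 0 ≤ z) (hw : 0 ≤ w) :
    min (x + y) (z + w) ≤ min x z + min x w + min y z + min y w := by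
  have h1 : min (x + y) (z + w) ≤ min x (z + w) + min y (z + w) :=
    min_add_left hx hy (by linarith)
  have h2 : min x (z + w) ≤ min x z + min x w := by
    rw [min_comm x (z+w), min_comm x z, min_comm x w]
    exact min_add_left hz hw hx
  have h3 : min y (z + w) ≤ min y z + min y w := by
    rw [min_comm y (z+w), min_comm y z, min_comm y w]
    exact min_add_left hz hw hy
  linarith

/-- the key cross-term estimate -/
lemma min_cross {a b a' b' : ℝ} (h1 : min |a| |a'| = 0) (h2 : min |b| |b'| = 0) :
    min |a + b| |a' + b'| ≤ min |a| |b'| + min |b| |a'| := by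
  have habs : min |a + b| |a' + b'| ≤ min (|a| + |b|) (|a'| + |b'|) :=
    min_le_min (abs_add_le _ _) (abs_add_le _ _)
  have h4 := min4 (abs_nonneg a) (abs_nonneg b) (abs_nonneg a') (abs_nonneg b')
  rw [h1, h2] at h4
  linarith

/-- concavity: sum of θ-powers bound -/
lemma sum_rpow_le {s : Finset ℕ} {u : ℕ → ℝ} (hu : ∀ i ∈ s, 0 ≤ u i) {θ : ℝ}
    (h0 : 0 < θ) (h1 : θ ≤ 1) :
    ∑ i ∈ s, u i ^ θ ≤ (s.card : ℝ) ^ (1 - θ) * (∑ i ∈ s, u i) ^ θ := by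
  rcases Finset.eq_empty_or_nonempty s with rfl | hs
  · simp
    positivity
  have hc : (0 : ℝ) < s.card := by exact_mod_cast Finset.card_pos.mpr hs
  have key := Real.arith_mean_le_rpow_mean s (fun _ => (s.card : ℝ)⁻¹)
    (fun i => u i ^ θ) (fun i _ => by positivity)
    (by rw [Finset.sum_const, nsmul_eq_mul]; field_simp)
    (fun i hi => Real.rpow_nonneg (hu i hi) θ) (p := 1/θ)
    (by rw [le_div_iff₀ h0, one_mul]; exact h1)
  have hz : ∀ i ∈ s, (s.card : ℝ)⁻¹ * (u i ^ θ) ^ (1/θ) = (s.card : ℝ)⁻¹ * u i := by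
    intro i hi
    rw [← Real.rpow_mul (hu i hi), mul_one_div, div_self h0.ne', Real.rpow_one]
  rw [Finset.sum_congr rfl hz, one_div_one_div, ← Finset.mul_sum, ← Finset.mul_sum] at key
  have hsum_nonneg : 0 ≤ ∑ i ∈ s, u i := Finset.sum_nonneg hu
  rw [Real.mul_rpow (by positivity) hsum_nonneg] at key
  have hkey2 : ∑ i ∈ s, u i ^ θ
      ≤ (s.card : ℝ) * ((s.card : ℝ)⁻¹ ^ θ * (∑ i ∈ s, u i) ^ θ) := by
    calc ∑ i ∈ s, u i ^ θ = (s.card : ℝ) * ((s.card : ℝ)⁻¹ * ∑ i ∈ s, u i ^ θ) := by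
          field_simp
      _ ≤ _ := mul_le_mul_of_nonneg_left key hc.le
  refine le_trans hkey2 (le_of_eq ?_)
  rw [← mul_assoc]
  congr 1
  rw [Real.inv_rpow hc.le, Real.rpow_sub hc, Real.rpow_one, div_eq_mul_inv]

/-- convexity: (A+B)^t ≤ 2^(t-1) (A^t + B^t) -/
lemma two_term_rpow {A B : ℝ} (hA : 0 ≤ A) (hB : 0 ≤ B) {t : ℝ} (ht : 1 ≤ t) :
    (A + B) ^ t ≤ 2 ^ (t - 1) * (A ^ t + B ^ t) := by
  have key := Real.arith_mean_le_rpow_mean (Finset.univ : Finset (Fin 2))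
    ![(1:ℝ)/2, 1/2] ![A, B] (by intro i _; fin_cases i <;> norm_num)
    (by simp [Fin.sum_univ_two]; norm_num)
    (by intro i _; fin_cases i <;> simpa) ht
  rw [Fin.sum_univ_two, Fin.sum_univ_two] at key
  simp only [Matrix.cons_val_zero, Matrix.cons_val_one, Matrix.head_cons] at key
  -- key : 1/2 A + 1/2 B ≤ (1/2 A^t + 1/2 B^t)^(1/t)
  have ht0 : 0 < t := lt_of_lt_of_le one_pos ht
  have h2 : ((1:ℝ)/2 * A + 1/2 * B) ^ t ≤ (1/2 * A ^ t + 1/2 * B ^ t) := by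
    have h := Real.rpow_le_rpow (by positivity) key ht0.le
    rwa [← Real.rpow_mul (by positivity), one_div t, inv_mul_cancel₀ ht0.ne',
      Real.rpow_one] at h
  have hL : ((1:ℝ)/2 * A + 1/2 * B) ^ t = (1/2 : ℝ) ^ t * (A + B) ^ t := by
    rw [← Real.mul_rpow (by norm_num) (by positivity)]
    ring_nf
  rw [hL] at h2
  have hpos : (0:ℝ) < (1/2 : ℝ) ^ t := by positivity
  have h3 : (A + B) ^ t ≤ ((1/2 : ℝ) ^ t)⁻¹ * (1/2 * A ^ t + 1/2 * B ^ t) := by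
    rw [← div_eq_inv_mul, le_div_iff₀ hpos, mul_comm]
    exact h2
  refine le_trans h3 (le_of_eq ?_)
  have : ((1/2 : ℝ) ^ t)⁻¹ = 2 ^ t := by
    rw [one_div, Real.inv_rpow (by norm_num), inv_inv]
  rw [this, Real.rpow_sub (by norm_num), Real.rpow_one]
  ring



lemma fact_ne_zero (P : ℝ≥0∞) [Fact (1 ≤ P)] : P ≠ 0 := by
  have := (Fact.out : 1 ≤ P); intro hP; rw [hP] at this; simp at this

noncomputable def std (P : ℝ≥0∞) [Fact (1 ≤ P)] (j : ℕ) :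
    Lp ℝ P (Measure.count : Measure ℕ) :=
  indicatorConstLp P (measurableSet_singleton j)
    (by simp [Measure.count_singleton]) (1 : ℝ)

lemma std_apply (P : ℝ≥0∞) [Fact (1 ≤ P)] (j t : ℕ) :
    (std P j : ℕ → ℝ) t = if t = j then 1 else 0 := by
  have h := ae_eq_all (indicatorConstLp_coeFn (p := P)
    (hs := measurableSet_singleton j)
    (hμs := by simp [Measure.count_singleton]) (c := (1:ℝ)))
  rw [std, h t, Set.indicator_apply]
  simp [Set.mem_singleton_iff]

lemma norm_std (P : ℝ≥0∞) [Fact (1 ≤ P)] (hP : P ≠ ∞) (j : ℕ) : ‖std P j‖ = 1 := by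
  rw [std, norm_indicatorConstLp (fact_ne_zero P) hP]
  simp [Measure.count_singleton]

lemma abs_apply_le_norm {P : ℝ≥0∞} [Fact (1 ≤ P)] (hP : P ≠ ∞)
    (F : Lp ℝ P (Measure.count : Measure ℕ)) (i : ℕ) :
    |(F : ℕ → ℝ) i| ≤ ‖F‖ := by
  have h := sum_rpow_le_norm hP F {i}
  rw [Finset.sum_singleton] at h
  have hr0 : 0 < P.toReal := ENNReal.toReal_pos (fact_ne_zero P) hP
  exact (Real.rpow_le_rpow_iff (abs_nonneg _) (norm_nonneg F) hr0).mp h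

/-- evaluation at a coordinate, as a continuous linear functional on Lp(count) -/
noncomputable def ev (P : ℝ≥0∞) [Fact (1 ≤ P)] (hP : P ≠ ∞) (i : ℕ) :
    Lp ℝ P (Measure.count : Measure ℕ) →L[ℝ] ℝ :=
  LinearMap.mkContinuous
    { toFun := fun F => (F : ℕ → ℝ) i
      map_add' := fun F G => (ae_eq_all (Lp.coeFn_add F G) i).trans rfl
      map_smul' := fun c F => (ae_eq_all (Lp.coeFn_smul c F) i).trans rfl }
    1 (fun F => by rw [Real.norm_eq_abs, one_mul]; exact abs_apply_le_norm hP F i)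

lemma ev_apply {P : ℝ≥0∞} [Fact (1 ≤ P)] (hP : P ≠ ∞) (i : ℕ)
    (F : Lp ℝ P (Measure.count : Measure ℕ)) : ev P hP i F = (F : ℕ → ℝ) i := rfl

lemma coeFn_sum_apply {ι : Type*} {Q : ℝ≥0∞} [Fact (1 ≤ Q)] (s : Finset ι)
    (f : ι → Lp ℝ Q (Measure.count : Measure ℕ)) (t : ℕ) :
    ((∑ i ∈ s, f i : Lp ℝ Q (Measure.count : Measure ℕ)) : ℕ → ℝ) t
      = ∑ i ∈ s, (f i : ℕ → ℝ) t := by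
  classical
  induction s using Finset.cons_induction with
  | empty =>
      rw [Finset.sum_empty, Finset.sum_empty]
      exact (ae_eq_all (Lp.coeFn_zero ℝ Q (Measure.count : Measure ℕ)) t)
  | cons a s ha ih =>
      rw [Finset.sum_cons, Finset.sum_cons,
        (ae_eq_all (Lp.coeFn_add _ _) t : _), Pi.add_apply, ih]

def grid (k : ℕ) : Finset (ℕ × ℕ) := (Finset.range k) ×ˢ (Finset.range k)

noncomputable def Top (P Q : ℝ≥0∞) [Fact (1 ≤ P)] [Fact (1 ≤ Q)] (hP : P ≠ ∞) (k : ℕ) :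
    Lp ℝ P (Measure.count : Measure ℕ) →L[ℝ] Lp ℝ Q (Measure.count : Measure ℕ) :=
  ∑ rc ∈ grid k,
    ((((k:ℝ) ^ (-(1/Q.toReal))) • (ev P hP rc.1 + ev P hP (k + rc.2))).smulRight
      (std Q (Nat.pair rc.1 rc.2)))

lemma Top_apply {P Q : ℝ≥0∞} [Fact (1 ≤ P)] [Fact (1 ≤ Q)] (hP : P ≠ ∞) (k : ℕ)
    (x : Lp ℝ P (Measure.count : Measure ℕ)) (t : ℕ) :
    ((Top P Q hP k x) : ℕ → ℝ) t
      = ∑ rc ∈ grid k, ((k:ℝ) ^ (-(1/Q.toReal))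
          * ((x : ℕ → ℝ) rc.1 + (x : ℕ → ℝ) (k + rc.2)))
          * (if t = Nat.pair rc.1 rc.2 then 1 else 0) := by
  rw [Top, ContinuousLinearMap.sum_apply]
  rw [coeFn_sum_apply]
  refine Finset.sum_congr rfl ?_
  intro rc _
  rw [ContinuousLinearMap.smulRight_apply,
    (ae_eq_all (Lp.coeFn_smul _ _) t : _), Pi.smul_apply, std_apply]
  simp [ev_apply, smul_eq_mul]
  ring_nf


end Stmt13

section Part4
namespace Stmt13
open MeasureTheory ENNReal Finset

variable {P Q : ℝ≥0∞} [Fact (1 ≤ P)] [Fact (1 ≤ Q)]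

lemma one_le_toReal (hQ : Q ≠ ∞) : 1 ≤ Q.toReal := by
  have h := (Fact.out : 1 ≤ Q)
  have := ENNReal.toReal_mono hQ h
  simpa using this

def gridT (k : ℕ) : Finset ℕ := (grid k).image (fun rc => Nat.pair rc.1 rc.2)

lemma pair_injOn (k : ℕ) : Set.InjOn (fun rc : ℕ × ℕ => Nat.pair rc.1 rc.2) (grid k) := by
  intro a _ b _ hab
  simp only [Nat.pair_eq_pair] at hab
  exact Prod.ext hab.1 hab.2

lemma Top_support (hP : P ≠ ∞) (k : ℕ) (x : Lp ℝ P (Measure.count : Measure ℕ))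
    {t : ℕ} (ht : t ∉ gridT k) : ((Top P Q hP k x) : ℕ → ℝ) t = 0 := by
  rw [Top_apply]
  refine Finset.sum_eq_zero ?_
  intro rc hrc
  have : t ≠ Nat.pair rc.1 rc.2 := by
    intro h
    exact ht (Finset.mem_image.mpr ⟨rc, hrc, h.symm⟩)
  simp [this]

lemma Top_apply_pair (hP : P ≠ ∞) (k : ℕ) (x : Lp ℝ P (Measure.count : Measure ℕ))
    {r c : ℕ} (hr : r < k) (hc : c < k) :
    ((Top P Q hP k x) : ℕ → ℝ) (Nat.pair r c)
      = (k:ℝ) ^ (-(1/Q.toReal)) * ((x : ℕ → ℝ) r + (x : ℕ → ℝ) (k + c)) := by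
  rw [Top_apply]
  rw [Finset.sum_eq_single_of_mem (r, c)
    (by simp [grid, Finset.mem_product, Finset.mem_range, hr, hc])]
  · simp
  · intro rc' _ hne
    have : Nat.pair r c ≠ Nat.pair rc'.1 rc'.2 := by
      intro h
      rw [Nat.pair_eq_pair] at h
      exact hne (Prod.ext h.1.symm h.2.symm)
    simp [this]

/-- Norm of any Lq element supported on the grid. -/
lemma norm_eq_sum_grid (hQ : Q ≠ ∞) (k : ℕ) (G : Lp ℝ Q (Measure.count : Measure ℕ))
    (hsupp : ∀ t ∉ gridT k, (G : ℕ → ℝ) t = 0) :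
    ‖G‖ = (∑ rc ∈ grid k, |(G : ℕ → ℝ) (Nat.pair rc.1 rc.2)| ^ Q.toReal) ^ (1/Q.toReal) := by
  rw [norm_eq_rpow_sum hQ G hsupp]
  congr 1
  rw [gridT, Finset.sum_image (fun a ha b hb h => pair_injOn k ha hb h)]

lemma sum_abs_rpow_le (hP : P ≠ ∞) (x : Lp ℝ P (Measure.count : Measure ℕ))
    {t : ℝ} (htp : P.toReal ≤ t) (s : Finset ℕ) :
    ∑ i ∈ s, |(x : ℕ → ℝ) i| ^ t ≤ ‖x‖ ^ t := by
  have hp1 : 1 ≤ P.toReal := one_le_toReal hP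
  have ht0 : 0 < t := lt_of_lt_of_le (by linarith) htp
  rcases eq_or_lt_of_le (norm_nonneg x) with hM | hM
  · have hz : ∀ i, (x : ℕ → ℝ) i = 0 := by
      intro i
      have := abs_apply_le_norm hP x i
      rw [← hM] at this
      exact abs_eq_zero.mp (le_antisymm this (abs_nonneg _))
    simp [hz, Real.zero_rpow ht0.ne', ← hM]
  · -- termwise: |x i|^t ≤ |x i|^p * ‖x‖^(t-p)
    have hterm : ∀ i, |(x : ℕ → ℝ) i| ^ t ≤ |(x : ℕ → ℝ) i| ^ P.toReal * ‖x‖ ^ (t - P.toReal) := by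
      intro i
      rcases eq_or_lt_of_le (abs_nonneg ((x : ℕ → ℝ) i)) with h0 | h0
      · rw [← h0, Real.zero_rpow ht0.ne', Real.zero_rpow (by linarith : P.toReal ≠ 0)]
        · simp
      · calc |(x : ℕ → ℝ) i| ^ t
              = |(x : ℕ → ℝ) i| ^ P.toReal * |(x : ℕ → ℝ) i| ^ (t - P.toReal) := by
                rw [← Real.rpow_add h0]; ring_nf
          _ ≤ |(x : ℕ → ℝ) i| ^ P.toReal * ‖x‖ ^ (t - P.toReal) := by
                refine mul_le_mul_of_nonneg_left ?_ (Real.rpow_nonneg (abs_nonneg _) _)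
                exact Real.rpow_le_rpow (abs_nonneg _) (abs_apply_le_norm hP x i) (by linarith)
    calc ∑ i ∈ s, |(x : ℕ → ℝ) i| ^ t
        ≤ ∑ i ∈ s, |(x : ℕ → ℝ) i| ^ P.toReal * ‖x‖ ^ (t - P.toReal) :=
          Finset.sum_le_sum (fun i _ => hterm i)
      _ = (∑ i ∈ s, |(x : ℕ → ℝ) i| ^ P.toReal) * ‖x‖ ^ (t - P.toReal) := by
          rw [Finset.sum_mul]
      _ ≤ ‖x‖ ^ P.toReal * ‖x‖ ^ (t - P.toReal) := by
          refine mul_le_mul_of_nonneg_right (sum_rpow_le_norm hP x s) (Real.rpow_nonneg (norm_nonneg _) _)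
      _ = ‖x‖ ^ t := by
          rw [← Real.rpow_add hM]; ring_nf

/-- Operator norm bound: `‖Top x‖ ≤ 2^(1-1/q) ‖x‖`. -/
lemma norm_Top_apply_le (hP : P ≠ ∞) (hQ : Q ≠ ∞) (hpq : P.toReal ≤ Q.toReal)
    {k : ℕ} (hk : 0 < k) (x : Lp ℝ P (Measure.count : Measure ℕ)) :
    ‖Top P Q hP k x‖ ≤ 2 ^ (1 - 1/Q.toReal) * ‖x‖ := by
  set r := Q.toReal with hrdef
  have hr1 : 1 ≤ r := one_le_toReal hQ
  have hr0 : (0:ℝ) < r := by linarith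
  have hk0 : (0:ℝ) < (k:ℝ) := by exact_mod_cast hk
  set M := ‖x‖ with hMdef
  have hM0 : 0 ≤ M := norm_nonneg x
  have hkr : ((k:ℝ) ^ (-(1/r))) ^ r = (k:ℝ)⁻¹ := by
    rw [← Real.rpow_mul hk0.le, show (-(1/r)) * r = -1 by field_simp]
    exact Real.rpow_neg_one _
  set F := ((Top P Q hP k x) : ℕ → ℝ) with hF
  have hterm : ∀ rc ∈ grid k, |F (Nat.pair rc.1 rc.2)| ^ r
      ≤ (k:ℝ)⁻¹ * (2 ^ (r-1) * (|(x : ℕ → ℝ) rc.1| ^ r + |(x : ℕ → ℝ) (k + rc.2)| ^ r)) := by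
    intro rc hrc
    rw [grid, Finset.mem_product, Finset.mem_range, Finset.mem_range] at hrc
    rw [hF, Top_apply_pair hP k x hrc.1 hrc.2, abs_mul,
      abs_of_pos (Real.rpow_pos_of_pos hk0 _),
      Real.mul_rpow (Real.rpow_nonneg hk0.le _) (abs_nonneg _), hkr]
    refine mul_le_mul_of_nonneg_left ?_ (by positivity)
    calc |(x : ℕ → ℝ) rc.1 + (x : ℕ → ℝ) (k + rc.2)| ^ r
        ≤ (|(x : ℕ → ℝ) rc.1| + |(x : ℕ → ℝ) (k + rc.2)|) ^ r :=
          Real.rpow_le_rpow (abs_nonneg _) (abs_add_le _ _) hr0.le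
      _ ≤ 2 ^ (r-1) * (|(x : ℕ → ℝ) rc.1| ^ r + |(x : ℕ → ℝ) (k + rc.2)| ^ r) :=
          two_term_rpow (abs_nonneg _) (abs_nonneg _) hr1
  -- combine the sums
  have hAB : ∑ i ∈ Finset.range k, |(x : ℕ → ℝ) i| ^ r
      + ∑ c ∈ Finset.range k, |(x : ℕ → ℝ) (k + c)| ^ r ≤ M ^ r := by
    have himg : ∑ c ∈ Finset.range k, |(x : ℕ → ℝ) (k + c)| ^ r
        = ∑ i ∈ (Finset.range k).image (k + ·), |(x : ℕ → ℝ) i| ^ r := by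
      rw [Finset.sum_image (by intro a _ b _ h; simp only at h; omega)]
    have hdisj : Disjoint (Finset.range k) ((Finset.range k).image (k + ·)) := by
      rw [Finset.disjoint_left]
      intro a ha hb
      rw [Finset.mem_range] at ha
      rw [Finset.mem_image] at hb
      obtain ⟨b, _, hb⟩ := hb
      omega
    rw [himg, ← Finset.sum_union hdisj]
    exact sum_abs_rpow_le hP x hpq _
  have hsum : ∑ rc ∈ grid k, |F (Nat.pair rc.1 rc.2)| ^ r ≤ 2 ^ (r-1) * M ^ r := by
    have e1 : ∑ rc ∈ grid k, |(x : ℕ → ℝ) rc.1| ^ r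
        = (k:ℝ) * ∑ i ∈ Finset.range k, |(x : ℕ → ℝ) i| ^ r := by
      rw [grid, Finset.sum_product]
      simp only [Finset.sum_const, Finset.card_range, nsmul_eq_mul]
      rw [Finset.mul_sum]
    have e2 : ∑ rc ∈ grid k, |(x : ℕ → ℝ) (k + rc.2)| ^ r
        = (k:ℝ) * ∑ c ∈ Finset.range k, |(x : ℕ → ℝ) (k + c)| ^ r := by
      rw [grid, Finset.sum_product]
      simp only [Finset.sum_const, Finset.card_range, nsmul_eq_mul]
    calc ∑ rc ∈ grid k, |F (Nat.pair rc.1 rc.2)| ^ r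
        ≤ ∑ rc ∈ grid k,
            (k:ℝ)⁻¹ * (2 ^ (r-1) * (|(x : ℕ → ℝ) rc.1| ^ r + |(x : ℕ → ℝ) (k + rc.2)| ^ r)) :=
          Finset.sum_le_sum hterm
      _ = (k:ℝ)⁻¹ * 2 ^ (r-1) * ((k:ℝ) * (∑ i ∈ Finset.range k, |(x : ℕ → ℝ) i| ^ r
            + ∑ c ∈ Finset.range k, |(x : ℕ → ℝ) (k + c)| ^ r)) := by
          rw [← Finset.mul_sum, ← Finset.mul_sum, Finset.sum_add_distrib, e1, e2]
          ring
      _ ≤ (k:ℝ)⁻¹ * 2 ^ (r-1) * ((k:ℝ) * M ^ r) := by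
          refine mul_le_mul_of_nonneg_left ?_ (by positivity)
          exact mul_le_mul_of_nonneg_left hAB (by positivity)
      _ = 2 ^ (r-1) * M ^ r := by
          field_simp
  have hnorm : ‖Top P Q hP k x‖
      = (∑ rc ∈ grid k, |F (Nat.pair rc.1 rc.2)| ^ r) ^ (1/r) :=
    norm_eq_sum_grid hQ k _ (fun t ht => Top_support hP k x ht)
  rw [hnorm]
  calc (∑ rc ∈ grid k, |F (Nat.pair rc.1 rc.2)| ^ r) ^ (1/r)
      ≤ (2 ^ (r-1) * M ^ r) ^ (1/r) := by
        refine Real.rpow_le_rpow ?_ hsum (by positivity)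
        exact Finset.sum_nonneg (fun rc _ => Real.rpow_nonneg (abs_nonneg _) _)
    _ = 2 ^ (1 - 1/r) * M := by
        rw [Real.mul_rpow (by positivity) (Real.rpow_nonneg hM0 _),
          ← Real.rpow_mul (by norm_num : (0:ℝ) ≤ 2),
          ← Real.rpow_mul hM0,
          show (r - 1) * (1/r) = 1 - 1/r by field_simp,
          show r * (1/r) = 1 by field_simp, Real.rpow_one]

end Stmt13
end Part4

section Part5
namespace Stmt13
open MeasureTheory ENNReal Finset

variable {P Q : ℝ≥0∞} [Fact (1 ≤ P)] [Fact (1 ≤ Q)]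

lemma Top_nonneg (hP : P ≠ ∞) (k : ℕ) (x : Lp ℝ P (Measure.count : Measure ℕ))
    (hx : 0 ≤ x) : 0 ≤ Top P Q hP k x := by
  rw [← Lp.coeFn_nonneg]
  have hxc : ∀ i, (0:ℝ) ≤ (x : ℕ → ℝ) i := by
    have h := (Lp.coeFn_nonneg x).mpr hx
    have h2 := ae_all h
    intro i; simpa using h2 i
  refine Filter.Eventually.of_forall ?_
  intro t
  simp only [Pi.zero_apply]
  rw [Top_apply]
  refine Finset.sum_nonneg ?_
  intro rc _
  have h1 : (0:ℝ) ≤ (k:ℝ) ^ (-(1/Q.toReal)) := Real.rpow_nonneg (Nat.cast_nonneg k) _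
  have h2 : (0:ℝ) ≤ if t = Nat.pair rc.1 rc.2 then (1:ℝ) else 0 := by positivity
  exact mul_nonneg (mul_nonneg h1 (add_nonneg (hxc _) (hxc _))) h2

lemma Top_range_fd (hP : P ≠ ∞) (k : ℕ) :
    FiniteDimensional ℝ (LinearMap.range ((Top P Q hP k) :
      Lp ℝ P (Measure.count : Measure ℕ) →ₗ[ℝ] Lp ℝ Q (Measure.count : Measure ℕ))) := by
  classical
  have hle : LinearMap.range ((Top P Q hP k) :
      Lp ℝ P (Measure.count : Measure ℕ) →ₗ[ℝ] Lp ℝ Q (Measure.count : Measure ℕ))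
      ≤ Submodule.span ℝ
        (((grid k).image (fun rc => std Q (Nat.pair rc.1 rc.2)) : Finset _) : Set _) := by
    rintro _ ⟨y, rfl⟩
    have hexp : Top P Q hP k y = ∑ rc ∈ grid k,
        (((k:ℝ) ^ (-(1/Q.toReal)) • (ev P hP rc.1 + ev P hP (k + rc.2))) y)
          • std Q (Nat.pair rc.1 rc.2) := by
      rw [Top, ContinuousLinearMap.sum_apply]
      exact Finset.sum_congr rfl (fun rc _ => ContinuousLinearMap.smulRight_apply)
    show Top P Q hP k y ∈ _
    rw [hexp]
    refine Submodule.sum_mem _ ?_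
    intro rc hrc
    refine Submodule.smul_mem _ _ (Submodule.subset_span ?_)
    exact Finset.mem_coe.mpr (Finset.mem_image_of_mem _ hrc)
  exact Submodule.finiteDimensional_of_le hle

/-- The scalar cross estimate. -/
lemma cross_sum {p q : ℝ} (hp : 1 ≤ p) (hpq : p < q) {k : ℕ} (hk : 0 < k)
    (u v : ℕ → ℝ) (hu : ∀ i, 0 ≤ u i) (hv : ∀ i, 0 ≤ v i) {M : ℝ} (hM : 0 ≤ M)
    (hus : ∑ i ∈ Finset.range k, u i ^ p ≤ M ^ p)
    (hvs : ∑ c ∈ Finset.range k, v c ^ p ≤ M ^ p) :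
    ∑ r ∈ Finset.range k, ∑ c ∈ Finset.range k, min (u r) (v c) ^ q
      ≤ (k:ℝ) ^ (2 - 2 * (min p (q/2)) / p) * M ^ q := by
  have hp0 : (0:ℝ) < p := by linarith
  have hq0 : (0:ℝ) < q := by linarith
  have hk0 : (0:ℝ) < (k:ℝ) := by exact_mod_cast hk
  set α := min p (q/2) with hα
  have hα0 : 0 < α := lt_min hp0 (by linarith)
  have hαp : α ≤ p := min_le_left _ _
  have h2αq : 2 * α ≤ q := by
    have := min_le_right p (q/2); rw [hα]; linarith
  -- individual bounds u i ≤ M, v i ≤ M for indices in range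
  have hub : ∀ i ∈ Finset.range k, u i ≤ M := by
    intro i hi
    have h1 : u i ^ p ≤ M ^ p := le_trans (Finset.single_le_sum
      (fun j _ => Real.rpow_nonneg (hu j) p) hi) hus
    exact (Real.rpow_le_rpow_iff (hu i) hM hp0).mp h1
  have hvb : ∀ i ∈ Finset.range k, v i ≤ M := by
    intro i hi
    have h1 : v i ^ p ≤ M ^ p := le_trans (Finset.single_le_sum
      (fun j _ => Real.rpow_nonneg (hv j) p) hi) hvs
    exact (Real.rpow_le_rpow_iff (hv i) hM hp0).mp h1
  -- termwise estimate
  have hterm : ∀ r ∈ Finset.range k, ∀ c ∈ Finset.range k,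
      min (u r) (v c) ^ q ≤ u r ^ α * v c ^ α * M ^ (q - 2*α) := by
    intro r hr c hc
    rcases eq_or_lt_of_le (le_min (hu r) (hv c)) with h0 | h0
    · rw [← h0, Real.zero_rpow hq0.ne']
      exact mul_nonneg (mul_nonneg (Real.rpow_nonneg (hu r) _) (Real.rpow_nonneg (hv c) _))
        (Real.rpow_nonneg hM _)
    · have hmM : min (u r) (v c) ≤ M := le_trans (min_le_left _ _) (hub r hr)
      calc min (u r) (v c) ^ q
          = min (u r) (v c) ^ α * min (u r) (v c) ^ α * min (u r) (v c) ^ (q - 2*α) := by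
            rw [← Real.rpow_add h0, ← Real.rpow_add h0]; ring_nf
        _ ≤ u r ^ α * v c ^ α * M ^ (q - 2*α) := by
            refine mul_le_mul (mul_le_mul ?_ ?_ (Real.rpow_nonneg (le_min (hu r) (hv c)) _)
                (Real.rpow_nonneg (hu r) _))
              ?_ (Real.rpow_nonneg (le_min (hu r) (hv c)) _)
              (mul_nonneg (Real.rpow_nonneg (hu r) _) (Real.rpow_nonneg (hv c) _))
            · exact Real.rpow_le_rpow h0.le (min_le_left _ _) hα0.le
            · exact Real.rpow_le_rpow h0.le (min_le_right _ _) hα0.le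
            · exact Real.rpow_le_rpow h0.le hmM (by linarith)
  -- sum of α-powers
  have hθ : 0 < α / p := by positivity
  have hθ1 : α / p ≤ 1 := by
    rw [div_le_one hp0]; exact hαp
  have hsums : ∀ (w : ℕ → ℝ), (∀ i, 0 ≤ w i) → (∑ i ∈ Finset.range k, w i ^ p ≤ M ^ p) →
      ∑ i ∈ Finset.range k, w i ^ α ≤ (k:ℝ) ^ (1 - α/p) * M ^ α := by
    intro w hw hws
    have hrw : ∀ i, w i ^ α = (w i ^ p) ^ (α/p) := by
      intro i
      rw [← Real.rpow_mul (hw i)]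
      congr 1; field_simp
    calc ∑ i ∈ Finset.range k, w i ^ α
        = ∑ i ∈ Finset.range k, (w i ^ p) ^ (α/p) := by
          exact Finset.sum_congr rfl (fun i _ => hrw i)
      _ ≤ ((Finset.range k).card : ℝ) ^ (1 - α/p) * (∑ i ∈ Finset.range k, w i ^ p) ^ (α/p) :=
          sum_rpow_le (fun i _ => Real.rpow_nonneg (hw i) p) hθ hθ1
      _ ≤ (k:ℝ) ^ (1 - α/p) * (M ^ p) ^ (α/p) := by
          rw [Finset.card_range]
          refine mul_le_mul_of_nonneg_left ?_ (by positivity)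
          exact Real.rpow_le_rpow (Finset.sum_nonneg (fun i _ => Real.rpow_nonneg (hw i) p))
            hws hθ.le
      _ = (k:ℝ) ^ (1 - α/p) * M ^ α := by
          rw [← Real.rpow_mul hM]
          congr 2; field_simp
  have hUs := hsums u hu hus
  have hVs := hsums v hv hvs
  -- combine
  rcases eq_or_lt_of_le hM with hM0 | hM0
  · -- M = 0 : everything vanishes
    have hz : ∀ r ∈ Finset.range k, ∀ c ∈ Finset.range k, min (u r) (v c) ^ q = 0 := by
      intro r hr c hc
      have : u r = 0 := le_antisymm (by rw [hM0]; exact hub r hr) (hu r)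
      rw [min_eq_left (by rw [this]; exact hv c), this, Real.zero_rpow hq0.ne']
    calc ∑ r ∈ Finset.range k, ∑ c ∈ Finset.range k, min (u r) (v c) ^ q
        = 0 := by
          refine Finset.sum_eq_zero (fun r hr => Finset.sum_eq_zero (fun c hc => hz r hr c hc))
      _ ≤ _ := by positivity
  · calc ∑ r ∈ Finset.range k, ∑ c ∈ Finset.range k, min (u r) (v c) ^ q
        ≤ ∑ r ∈ Finset.range k, ∑ c ∈ Finset.range k, u r ^ α * v c ^ α * M ^ (q - 2*α) := by
          refine Finset.sum_le_sum (fun r hr => Finset.sum_le_sum (fun c hc => hterm r hr c hc))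
      _ = (∑ r ∈ Finset.range k, u r ^ α) * (∑ c ∈ Finset.range k, v c ^ α) * M ^ (q - 2*α) := by
          rw [Finset.sum_mul_sum, Finset.sum_mul]
          refine Finset.sum_congr rfl (fun r _ => ?_)
          rw [Finset.sum_mul]
      _ ≤ ((k:ℝ) ^ (1 - α/p) * M ^ α) * ((k:ℝ) ^ (1 - α/p) * M ^ α) * M ^ (q - 2*α) := by
          refine mul_le_mul_of_nonneg_right ?_ (by positivity)
          refine mul_le_mul hUs hVs (Finset.sum_nonneg (fun c _ => Real.rpow_nonneg (hv c) α))
            (by positivity)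
      _ = (k:ℝ) ^ (2 - 2 * α / p) * M ^ q := by
          rw [show ((k:ℝ) ^ (1 - α/p) * M ^ α) * ((k:ℝ) ^ (1 - α/p) * M ^ α) * M ^ (q - 2*α)
            = ((k:ℝ) ^ (1 - α/p) * (k:ℝ) ^ (1 - α/p)) * (M ^ α * M ^ α * M ^ (q - 2*α)) by ring,
            ← Real.rpow_add hk0, ← Real.rpow_add hM0, ← Real.rpow_add hM0]
          congr 2 <;> ring

end Stmt13
end Part5

section Part6
namespace Stmt13
open MeasureTheory ENNReal Finset

variable {P Q : ℝ≥0∞} [Fact (1 ≤ P)] [Fact (1 ≤ Q)]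

lemma disj_pointwise (x y : Lp ℝ P (Measure.count : Measure ℕ)) (hxy : |x| ⊓ |y| = 0) :
    ∀ i, min |(x : ℕ → ℝ) i| |(y : ℕ → ℝ) i| = 0 := by
  have h1 : (fun i => min |(x : ℕ → ℝ) i| |(y : ℕ → ℝ) i|)
      =ᵐ[(Measure.count : Measure ℕ)] (0 : ℕ → ℝ) := by
    have e0 : ⇑(|x| ⊓ |y|) =ᵐ[(Measure.count : Measure ℕ)] (0 : ℕ → ℝ) := by
      rw [hxy]; exact Lp.coeFn_zero _ _ _
    filter_upwards [e0, Lp.coeFn_inf |x| |y|, Lp.coeFn_abs x, Lp.coeFn_abs y]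
      with i h0 h1 h2 h3
    have : (⇑|x| ⊓ ⇑|y|) i = 0 := by rw [← h1]; exact h0
    rw [Pi.inf_apply] at this
    rw [← h2, ← h3]
    simpa using this
  exact fun i => ae_eq_all h1 i

lemma inf_abs_pointwise (G H : Lp ℝ Q (Measure.count : Measure ℕ)) :
    ∀ t, ((|G| ⊓ |H| : Lp ℝ Q (Measure.count : Measure ℕ)) : ℕ → ℝ) t
      = min |(G : ℕ → ℝ) t| |(H : ℕ → ℝ) t| := by
  have h1 : (⇑(|G| ⊓ |H|) : ℕ → ℝ)
      =ᵐ[(Measure.count : Measure ℕ)]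
        (fun t => min |(G : ℕ → ℝ) t| |(H : ℕ → ℝ) t|) := by
    filter_upwards [Lp.coeFn_inf |G| |H|, Lp.coeFn_abs G, Lp.coeFn_abs H]
      with t h1 h2 h3
    rw [h1, Pi.inf_apply, h2, h3]
  exact fun t => ae_eq_all h1 t

/-- the ε-disjointness-preserving estimate -/
lemma eps_dp (hP : P ≠ ∞) (hQ : Q ≠ ∞) (hpq : P.toReal < Q.toReal)
    {k : ℕ} (hk : 0 < k) (x y : Lp ℝ P (Measure.count : Measure ℕ))
    (hxy : |x| ⊓ |y| = 0) :
    ‖(|Top P Q hP k x| ⊓ |Top P Q hP k y| : Lp ℝ Q (Measure.count : Measure ℕ))‖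
      ≤ 2 * (k:ℝ) ^ ((1 - 2 * (min P.toReal (Q.toReal/2)) / P.toReal) / Q.toReal)
        * max ‖x‖ ‖y‖ := by
  set p := P.toReal with hpdef
  set q := Q.toReal with hqdef
  have hp1 : 1 ≤ p := one_le_toReal hP
  have hq1 : 1 ≤ q := one_le_toReal hQ
  have hp0 : (0:ℝ) < p := by linarith
  have hq0 : (0:ℝ) < q := by linarith
  have hk0 : (0:ℝ) < (k:ℝ) := by exact_mod_cast hk
  set M := max ‖x‖ ‖y‖ with hMdef
  have hM0 : 0 ≤ M := le_trans (norm_nonneg x) (le_max_left _ _)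
  set κ := (k:ℝ) ^ (-(1/q)) with hκdef
  have hκ0 : 0 < κ := Real.rpow_pos_of_pos hk0 _
  have hκq : κ ^ q = (k:ℝ)⁻¹ := by
    rw [hκdef, ← Real.rpow_mul hk0.le, show (-(1/q)) * q = -1 by field_simp]
    exact Real.rpow_neg_one _
  set D := (|Top P Q hP k x| ⊓ |Top P Q hP k y| : Lp ℝ Q (Measure.count : Measure ℕ))
    with hDdef
  have hd := disj_pointwise x y hxy
  have hDpt := inf_abs_pointwise (Top P Q hP k x) (Top P Q hP k y)
  have hDsupp : ∀ t ∉ gridT k, (D : ℕ → ℝ) t = 0 := by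
    intro t ht
    rw [hDpt t, Top_support hP k x ht, Top_support hP k y ht]
    simp
  -- termwise bound
  have hterm : ∀ rc ∈ grid k, |(D : ℕ → ℝ) (Nat.pair rc.1 rc.2)| ^ q
      ≤ (k:ℝ)⁻¹ * (2 ^ (q-1) *
          ((min |(x : ℕ → ℝ) rc.1| |(y : ℕ → ℝ) (k + rc.2)|) ^ q
            + (min |(x : ℕ → ℝ) (k + rc.2)| |(y : ℕ → ℝ) rc.1|) ^ q)) := by
    intro rc hrc
    rw [grid, Finset.mem_product, Finset.mem_range, Finset.mem_range] at hrc
    set A := min |(x : ℕ → ℝ) rc.1| |(y : ℕ → ℝ) (k + rc.2)| with hA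
    set B := min |(x : ℕ → ℝ) (k + rc.2)| |(y : ℕ → ℝ) rc.1| with hB
    have hA0 : 0 ≤ A := le_min (abs_nonneg _) (abs_nonneg _)
    have hB0 : 0 ≤ B := le_min (abs_nonneg _) (abs_nonneg _)
    have hDval : (D : ℕ → ℝ) (Nat.pair rc.1 rc.2) ≤ κ * (A + B) := by
      rw [hDpt, Top_apply_pair hP k x hrc.1 hrc.2, Top_apply_pair hP k y hrc.1 hrc.2]
      have e1 : |κ * ((x : ℕ → ℝ) rc.1 + (x : ℕ → ℝ) (k + rc.2))|
          = κ * |(x : ℕ → ℝ) rc.1 + (x : ℕ → ℝ) (k + rc.2)| := by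
        rw [abs_mul, abs_of_pos hκ0]
      have e2 : |κ * ((y : ℕ → ℝ) rc.1 + (y : ℕ → ℝ) (k + rc.2))|
          = κ * |(y : ℕ → ℝ) rc.1 + (y : ℕ → ℝ) (k + rc.2)| := by
        rw [abs_mul, abs_of_pos hκ0]
      rw [e1, e2]
      have e3 : min (κ * |(x : ℕ → ℝ) rc.1 + (x : ℕ → ℝ) (k + rc.2)|)
          (κ * |(y : ℕ → ℝ) rc.1 + (y : ℕ → ℝ) (k + rc.2)|)
          = κ * min |(x : ℕ → ℝ) rc.1 + (x : ℕ → ℝ) (k + rc.2)|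
              |(y : ℕ → ℝ) rc.1 + (y : ℕ → ℝ) (k + rc.2)| := by
        rcases min_cases (|(x : ℕ → ℝ) rc.1 + (x : ℕ → ℝ) (k + rc.2)|)
          (|(y : ℕ → ℝ) rc.1 + (y : ℕ → ℝ) (k + rc.2)|) with ⟨h, _⟩ | ⟨h, _⟩ <;>
          rw [h] <;>
          [exact min_eq_left (by nlinarith [hκ0.le]);
           exact min_eq_right (by nlinarith [hκ0.le])]
      rw [e3]
      refine mul_le_mul_of_nonneg_left ?_ hκ0.le
      exact min_cross (hd rc.1) (hd (k + rc.2))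
    have hD0 : 0 ≤ (D : ℕ → ℝ) (Nat.pair rc.1 rc.2) := by
      rw [hDpt]; exact le_min (abs_nonneg _) (abs_nonneg _)
    calc |(D : ℕ → ℝ) (Nat.pair rc.1 rc.2)| ^ q
        ≤ (κ * (A + B)) ^ q := by
          refine Real.rpow_le_rpow (abs_nonneg _) ?_ hq0.le
          rw [abs_of_nonneg hD0]; exact hDval
      _ = κ ^ q * (A + B) ^ q := Real.mul_rpow hκ0.le (by linarith)
      _ ≤ (k:ℝ)⁻¹ * (2 ^ (q-1) * (A ^ q + B ^ q)) := by
          rw [hκq]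
          exact mul_le_mul_of_nonneg_left (two_term_rpow hA0 hB0 hq1) (by positivity)
  -- bounding the two cross sums
  have hxs : ∑ i ∈ Finset.range k, |(x : ℕ → ℝ) i| ^ p ≤ M ^ p := by
    refine le_trans (sum_abs_rpow_le hP x le_rfl _) ?_
    exact Real.rpow_le_rpow (norm_nonneg x) (le_max_left _ _) hp0.le
  have hys : ∑ i ∈ Finset.range k, |(y : ℕ → ℝ) i| ^ p ≤ M ^ p := by
    refine le_trans (sum_abs_rpow_le hP y le_rfl _) ?_
    exact Real.rpow_le_rpow (norm_nonneg y) (le_max_right _ _) hp0.le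
  have hshift : ∀ (z : Lp ℝ P (Measure.count : Measure ℕ)), ‖z‖ ≤ M →
      ∑ c ∈ Finset.range k, |(z : ℕ → ℝ) (k + c)| ^ p ≤ M ^ p := by
    intro z hz
    have himg : ∑ c ∈ Finset.range k, |(z : ℕ → ℝ) (k + c)| ^ p
        = ∑ i ∈ (Finset.range k).image (k + ·), |(z : ℕ → ℝ) i| ^ p := by
      rw [Finset.sum_image (by intro a _ b _ h; simp only at h; omega)]
    rw [himg]
    refine le_trans (sum_abs_rpow_le hP z le_rfl _) ?_
    exact Real.rpow_le_rpow (norm_nonneg z) hz hp0.le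
  set E := 2 - 2 * (min p (q/2)) / p with hE
  have hS1 : ∑ r ∈ Finset.range k, ∑ c ∈ Finset.range k,
      min |(x : ℕ → ℝ) r| |(y : ℕ → ℝ) (k + c)| ^ q ≤ (k:ℝ) ^ E * M ^ q :=
    cross_sum hp1 hpq hk _ _ (fun i => abs_nonneg _) (fun i => abs_nonneg _) hM0
      hxs (hshift y (le_max_right _ _))
  have hS2 : ∑ r ∈ Finset.range k, ∑ c ∈ Finset.range k,
      min |(x : ℕ → ℝ) (k + c)| |(y : ℕ → ℝ) r| ^ q ≤ (k:ℝ) ^ E * M ^ q := by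
    have hcomm : ∀ r c : ℕ, min |(x : ℕ → ℝ) (k + c)| |(y : ℕ → ℝ) r|
        = min |(y : ℕ → ℝ) r| |(x : ℕ → ℝ) (k + c)| := fun r c => min_comm _ _
    calc ∑ r ∈ Finset.range k, ∑ c ∈ Finset.range k,
          min |(x : ℕ → ℝ) (k + c)| |(y : ℕ → ℝ) r| ^ q
        = ∑ r ∈ Finset.range k, ∑ c ∈ Finset.range k,
          min |(y : ℕ → ℝ) r| |(x : ℕ → ℝ) (k + c)| ^ q := by
          refine Finset.sum_congr rfl (fun r _ => Finset.sum_congr rfl (fun c _ => ?_))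
          rw [hcomm]
      _ ≤ (k:ℝ) ^ E * M ^ q :=
          cross_sum hp1 hpq hk _ _ (fun i => abs_nonneg _) (fun i => abs_nonneg _) hM0
            hys (hshift x (le_max_left _ _))
  -- total
  have hsum : ∑ rc ∈ grid k, |(D : ℕ → ℝ) (Nat.pair rc.1 rc.2)| ^ q
      ≤ 2 ^ q * ((k:ℝ) ^ (E - 1) * M ^ q) := by
    calc ∑ rc ∈ grid k, |(D : ℕ → ℝ) (Nat.pair rc.1 rc.2)| ^ q
        ≤ ∑ rc ∈ grid k, (k:ℝ)⁻¹ * (2 ^ (q-1) *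
            ((min |(x : ℕ → ℝ) rc.1| |(y : ℕ → ℝ) (k + rc.2)|) ^ q
              + (min |(x : ℕ → ℝ) (k + rc.2)| |(y : ℕ → ℝ) rc.1|) ^ q)) :=
          Finset.sum_le_sum hterm
      _ = (k:ℝ)⁻¹ * 2 ^ (q-1) *
            ((∑ r ∈ Finset.range k, ∑ c ∈ Finset.range k,
              min |(x : ℕ → ℝ) r| |(y : ℕ → ℝ) (k + c)| ^ q)
            + (∑ r ∈ Finset.range k, ∑ c ∈ Finset.range k,
              min |(x : ℕ → ℝ) (k + c)| |(y : ℕ → ℝ) r| ^ q)) := by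
          rw [grid, Finset.sum_product]
          simp only [← Finset.mul_sum, Finset.sum_add_distrib]
          ring
      _ ≤ (k:ℝ)⁻¹ * 2 ^ (q-1) * ((k:ℝ) ^ E * M ^ q + (k:ℝ) ^ E * M ^ q) := by
          refine mul_le_mul_of_nonneg_left (add_le_add hS1 hS2) (by positivity)
      _ = 2 ^ q * ((k:ℝ)⁻¹ * (k:ℝ) ^ E * M ^ q) := by
          have h2q : (2:ℝ) ^ q = 2 ^ (q-1) * 2 := by
            rw [← Real.rpow_add_one (by norm_num : (2:ℝ) ≠ 0) (q-1)]
            norm_num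
          rw [h2q]
          ring
      _ = 2 ^ q * ((k:ℝ) ^ (E - 1) * M ^ q) := by
          congr 2
          rw [← Real.rpow_neg_one (k:ℝ), ← Real.rpow_add hk0]
          congr 1; ring
  -- conclude
  have hnorm : ‖D‖ = (∑ rc ∈ grid k, |(D : ℕ → ℝ) (Nat.pair rc.1 rc.2)| ^ q) ^ (1/q) :=
    norm_eq_sum_grid hQ k D hDsupp
  have hE1 : E - 1 = 1 - 2 * (min p (q/2)) / p := by rw [hE]; ring
  rw [hnorm]
  calc (∑ rc ∈ grid k, |(D : ℕ → ℝ) (Nat.pair rc.1 rc.2)| ^ q) ^ (1/q)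
      ≤ (2 ^ q * ((k:ℝ) ^ (E - 1) * M ^ q)) ^ (1/q) := by
        refine Real.rpow_le_rpow ?_ hsum (by positivity)
        exact Finset.sum_nonneg (fun rc _ => Real.rpow_nonneg (abs_nonneg _) _)
    _ = 2 * (k:ℝ) ^ ((1 - 2 * (min p (q/2)) / p) / q) * M := by
        rw [Real.mul_rpow (by positivity) (by positivity),
          Real.mul_rpow (by positivity) (Real.rpow_nonneg hM0 _),
          ← Real.rpow_mul (by norm_num : (0:ℝ) ≤ 2),
          ← Real.rpow_mul hk0.le, ← Real.rpow_mul hM0,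
          show q * (1/q) = 1 by field_simp, Real.rpow_one, Real.rpow_one,
          show (E - 1) * (1/q) = (1 - 2 * (min p (q/2)) / p) / q by rw [hE1]; ring]
        ring

end Stmt13
end Part6

section Part7
namespace Stmt13
open MeasureTheory ENNReal Finset

variable {P Q : ℝ≥0∞} [Fact (1 ≤ P)] [Fact (1 ≤ Q)]

lemma std_disjoint (i j : ℕ) (hij : i ≠ j) :
    (|std P i| ⊓ |std P j| : Lp ℝ P (Measure.count : Measure ℕ)) = 0 := by
  refine Lp.eq_zero_iff_ae_eq_zero.mpr ?_
  refine Filter.Eventually.of_forall (fun t => ?_)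
  rw [inf_abs_pointwise (std P i) (std P j) t, std_apply, std_apply]
  rcases eq_or_ne t i with rfl | hti
  · rw [if_pos rfl, if_neg hij]
    simp
  · rw [if_neg hti]
    simp

/-- The distance to disjointness-preserving operators. -/
lemma lower_bound (hP : P ≠ ∞) (hQ : Q ≠ ∞) {m : ℕ} (hm : 0 < m)
    (S : Lp ℝ P (Measure.count : Measure ℕ) →L[ℝ] Lp ℝ Q (Measure.count : Measure ℕ))
    (hS : ∀ x y, |x| ⊓ |y| = 0 → |S x| ⊓ |S y| = 0) :
    (2:ℝ) ^ (-(1:ℝ)/Q.toReal) ≤ ‖Top P Q hP (2*m) - S‖ := by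
  classical
  set k := 2*m with hkdef
  have hk : 0 < k := by omega
  set q := Q.toReal with hqdef
  have hq1 : 1 ≤ q := one_le_toReal hQ
  have hq0 : (0:ℝ) < q := by linarith
  have hk0 : (0:ℝ) < (k:ℝ) := by exact_mod_cast hk
  set κ := (k:ℝ) ^ (-(1/q)) with hκdef
  have hκ0 : 0 < κ := Real.rpow_pos_of_pos hk0 _
  have hκq : κ ^ q = (k:ℝ)⁻¹ := by
    rw [hκdef, ← Real.rpow_mul hk0.le, show (-(1/q)) * q = -1 by field_simp]
    exact Real.rpow_neg_one _
  -- disjointness of images of basis vectors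
  have hv : ∀ i j : ℕ, i ≠ j → ∀ t,
      min |((S (std P i)) : ℕ → ℝ) t| |((S (std P j)) : ℕ → ℝ) t| = 0 := by
    intro i j hij t
    exact disj_pointwise (S (std P i)) (S (std P j)) (hS _ _ (std_disjoint i j hij)) t
  -- the lines
  set L : ℕ → Finset ℕ := fun i =>
    if i < k then (Finset.range k).image (fun c => Nat.pair i c)
    else (Finset.range k).image (fun r => Nat.pair r (i - k)) with hLdef
  have hLcard : ∀ i, (L i).card = k := by
    intro i
    simp only [hLdef]
    split_ifs
    · rw [Finset.card_image_of_injective _ (fun a b h => (Nat.pair_eq_pair.mp h).2),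
        Finset.card_range]
    · rw [Finset.card_image_of_injective _ (fun a b h => (Nat.pair_eq_pair.mp h).1),
        Finset.card_range]
  have hLsub : ∀ i ∈ Finset.range (2*k), L i ⊆ gridT k := by
    intro i hi
    rw [Finset.mem_range] at hi
    intro t ht
    rw [hLdef] at ht
    simp only at ht
    split_ifs at ht with hik
    · rw [Finset.mem_image] at ht
      obtain ⟨c, hc, rfl⟩ := ht
      rw [Finset.mem_range] at hc
      exact Finset.mem_image.mpr ⟨(i, c), by
        rw [grid, Finset.mem_product, Finset.mem_range, Finset.mem_range]
        exact ⟨hik, hc⟩, rfl⟩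
    · rw [Finset.mem_image] at ht
      obtain ⟨r, hr, rfl⟩ := ht
      rw [Finset.mem_range] at hr
      exact Finset.mem_image.mpr ⟨(r, i - k), by
        rw [grid, Finset.mem_product, Finset.mem_range, Finset.mem_range]
        exact ⟨hr, by omega⟩, rfl⟩
  set Z : ℕ → Finset ℕ := fun i => (L i).filter (fun t => ((S (std P i)) : ℕ → ℝ) t ≠ 0)
    with hZdef
  -- counting
  have hcount : ∑ i ∈ Finset.range (2*k), (Z i).card ≤ k * k := by
    rw [← Finset.card_sigma]
    have hmaps : ∀ a ∈ (Finset.range (2*k)).sigma Z, a.2 ∈ gridT k := by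
      rintro ⟨i, t⟩ ha
      rw [Finset.mem_sigma] at ha
      exact hLsub i ha.1 (Finset.mem_of_mem_filter t ha.2)
    have hinj : Set.InjOn (fun a : (_ : ℕ) × ℕ => a.2)
        ((Finset.range (2*k)).sigma Z : Finset ((_ : ℕ) × ℕ)) := by
      rintro ⟨i, t⟩ ha ⟨j, t'⟩ hb hab
      simp only at hab
      subst hab
      rw [Finset.mem_coe, Finset.mem_sigma, hZdef, Finset.mem_filter] at ha hb
      rcases eq_or_ne i j with rfl | hij
      · rfl
      · exfalso
        have h0 := hv i j hij t
        rcases min_cases |((S (std P i)) : ℕ → ℝ) t| |((S (std P j)) : ℕ → ℝ) t|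
          with ⟨he, _⟩ | ⟨he, _⟩ <;> rw [he] at h0
        · exact ha.2.2 (abs_eq_zero.mp h0)
        · exact hb.2.2 (abs_eq_zero.mp h0)
    have hle := Finset.card_le_card_of_injOn _ hmaps hinj
    refine le_trans hle (le_of_eq ?_)
    rw [gridT, Finset.card_image_of_injOn (pair_injOn k), grid, Finset.card_product,
      Finset.card_range]
  -- pigeonhole
  have hpig : ∃ i ∈ Finset.range (2*k), (Z i).card ≤ m := by
    by_contra h
    push_neg at h
    have hlow : ∀ i ∈ Finset.range (2*k), m + 1 ≤ (Z i).card := fun i hi => h i hi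
    have := Finset.sum_le_sum hlow
    rw [Finset.sum_const, Finset.card_range, smul_eq_mul] at this
    have h2 : 2*k*(m+1) ≤ k*k := le_trans this hcount
    rw [hkdef] at h2
    nlinarith [hm]
  obtain ⟨i, hi2k, hZi⟩ := hpig
  rw [Finset.mem_range] at hi2k
  set W := L i \ Z i with hWdef
  have hWcard : m ≤ W.card := by
    have hsub : Z i ⊆ L i := by
      rw [hZdef]; exact Finset.filter_subset _ _
    rw [hWdef, Finset.card_sdiff_of_subset hsub, hLcard i, hkdef]
    omega
  -- value of T on the line
  have hTval : ∀ t ∈ L i, ((Top P Q hP k (std P i)) : ℕ → ℝ) t = κ := by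
    intro t ht
    rw [hLdef] at ht
    simp only at ht
    split_ifs at ht with hik
    · rw [Finset.mem_image] at ht
      obtain ⟨c, hc, rfl⟩ := ht
      rw [Finset.mem_range] at hc
      rw [Top_apply_pair hP k _ hik hc, std_apply, std_apply,
        if_pos rfl, if_neg (by omega : k + c ≠ i)]
      simp [hκdef, hqdef]
    · rw [Finset.mem_image] at ht
      obtain ⟨r, hr, rfl⟩ := ht
      rw [Finset.mem_range] at hr
      push_neg at hik
      rw [Top_apply_pair hP k _ hr (by omega : i - k < k), std_apply, std_apply,
        if_neg (by omega : r ≠ i), if_pos (by omega : k + (i - k) = i)]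
      simp [hκdef, hqdef]
  have hW0 : ∀ t ∈ W, ((S (std P i)) : ℕ → ℝ) t = 0 := by
    intro t ht
    rw [hWdef, Finset.mem_sdiff] at ht
    have := ht.2
    rw [hZdef, Finset.mem_filter] at this
    push_neg at this
    exact this ht.1
  -- the difference
  set F := (Top P Q hP k - S) (std P i) with hFdef
  have hFpt : ∀ t, (F : ℕ → ℝ) t
      = ((Top P Q hP k (std P i)) : ℕ → ℝ) t - ((S (std P i)) : ℕ → ℝ) t := by
    intro t
    rw [hFdef, ContinuousLinearMap.sub_apply]
    exact (ae_eq_all (Lp.coeFn_sub (Top P Q hP k (std P i)) (S (std P i))) t).trans rfl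
  have hsumW : (1:ℝ)/2 ≤ ∑ t ∈ W, |(F : ℕ → ℝ) t| ^ q := by
    have hterm : ∀ t ∈ W, |(F : ℕ → ℝ) t| ^ q = (k:ℝ)⁻¹ := by
      intro t ht
      have htL : t ∈ L i := (Finset.mem_sdiff.mp ht).1
      rw [hFpt, hTval t htL, hW0 t ht, sub_zero, abs_of_pos hκ0, hκq]
    rw [Finset.sum_congr rfl hterm, Finset.sum_const, nsmul_eq_mul]
    have hcard : (m:ℝ) ≤ (W.card : ℝ) := by exact_mod_cast hWcard
    have hkm : (k:ℝ) = 2*(m:ℝ) := by rw [hkdef]; push_cast; ring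
    have hm0 : (0:ℝ) < m := by exact_mod_cast hm
    rw [hkm]
    calc (1:ℝ)/2 = (m:ℝ) * (2*(m:ℝ))⁻¹ := by field_simp
      _ ≤ (W.card:ℝ) * (2*(m:ℝ))⁻¹ := mul_le_mul_of_nonneg_right hcard (by positivity)
  have hnormF : (1:ℝ)/2 ≤ ‖F‖ ^ q := le_trans hsumW (sum_rpow_le_norm hQ F W)
  have h2q : (2:ℝ) ^ (-(1:ℝ)/q) ≤ ‖F‖ := by
    have h1 : ((1:ℝ)/2) ^ (1/q) ≤ (‖F‖ ^ q) ^ (1/q) :=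
      Real.rpow_le_rpow (by norm_num) hnormF (by positivity)
    rw [← Real.rpow_mul (norm_nonneg F), show q * (1/q) = 1 by field_simp,
      Real.rpow_one] at h1
    refine le_trans (le_of_eq ?_) h1
    rw [show (-(1:ℝ))/q = -(1/q) by ring, Real.rpow_neg (by norm_num : (0:ℝ) ≤ 2),
      ← Real.inv_rpow (by norm_num : (0:ℝ) ≤ 2)]
    norm_num
  have hle := (Top P Q hP k - S).le_opNorm (std P i)
  rw [norm_std P hP i, mul_one] at hle
  exact le_trans h2q (le_trans (le_of_eq (by rw [hFdef])) hle)

end Stmt13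
end Part7

open MeasureTheory ENNReal

/-- For `1 ≤ p < q < ∞` and every `ε > 0` there is a finite rank positive
`ε`-disjointness preserving operator `T : ℓ_p → ℓ_q` with `‖T‖ ≤ 2^{1-1/q}` such that
`‖T - S‖ ≥ 2^{-1/q}` for every disjointness preserving `S`.  Here `ℓ_r` is realized as `L_r`
of counting measure on `ℕ`. -/
theorem stmt13 (p q : ℝ) (hp : 1 ≤ p) (hpq : p < q)
    [Fact (1 ≤ ENNReal.ofReal p)] [Fact (1 ≤ ENNReal.ofReal q)]
    (ε : ℝ) (hε : 0 < ε) :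
    ∃ T : Lp ℝ (ENNReal.ofReal p) (Measure.count : Measure ℕ) →L[ℝ]
        Lp ℝ (ENNReal.ofReal q) (Measure.count : Measure ℕ),
      FiniteDimensional ℝ (LinearMap.range (T : Lp ℝ (ENNReal.ofReal p)
        (Measure.count : Measure ℕ) →ₗ[ℝ] Lp ℝ (ENNReal.ofReal q) (Measure.count : Measure ℕ))) ∧
      (∀ x, 0 ≤ x → 0 ≤ T x) ∧
      (∀ x y, |x| ⊓ |y| = 0 → ‖|T x| ⊓ |T y|‖ ≤ ε * max ‖x‖ ‖y‖) ∧
      ‖T‖ ≤ (2 : ℝ) ^ (1 - 1 / q) ∧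
      (∀ S : Lp ℝ (ENNReal.ofReal p) (Measure.count : Measure ℕ) →L[ℝ]
          Lp ℝ (ENNReal.ofReal q) (Measure.count : Measure ℕ),
        (∀ x y, |x| ⊓ |y| = 0 → |S x| ⊓ |S y| = 0) →
        (2 : ℝ) ^ (-(1 : ℝ) / q) ≤ ‖T - S‖) := by
  have hq1 : (1:ℝ) ≤ q := by linarith
  have hp0 : (0:ℝ) < p := by linarith
  have hq0 : (0:ℝ) < q := by linarith
  have hP : ENNReal.ofReal p ≠ ∞ := ENNReal.ofReal_ne_top
  have hQ : ENNReal.ofReal q ≠ ∞ := ENNReal.ofReal_ne_top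
  have hPt : (ENNReal.ofReal p).toReal = p := ENNReal.toReal_ofReal hp0.le
  have hQt : (ENNReal.ofReal q).toReal = q := ENNReal.toReal_ofReal hq0.le
  -- the negative exponent
  set Ee : ℝ := (1 - 2 * (min p (q/2)) / p) / q with hEedef
  have hEeneg : 0 < -Ee := by
    have hmin : p/2 < min p (q/2) := by
      rcases le_total p (q/2) with h | h
      · rw [min_eq_left h]; linarith
      · rw [min_eq_right h]; linarith
    have hnum : 1 - 2 * (min p (q/2)) / p < 0 := by
      have h2 : 2 * (min p (q/2)) / p > 1 := by
        rw [gt_iff_lt, lt_div_iff₀ hp0]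
        linarith
      linarith
    have : Ee < 0 := div_neg_of_neg_of_pos hnum hq0
    linarith
  -- choose a good size
  have htend : Filter.Tendsto (fun n : ℕ => ((n:ℝ)) ^ Ee) Filter.atTop (nhds 0) := by
    have h1 : Filter.Tendsto (fun x : ℝ => x ^ (-(-Ee))) Filter.atTop (nhds 0) :=
      tendsto_rpow_neg_atTop hEeneg
    rw [neg_neg] at h1
    exact h1.comp tendsto_natCast_atTop_atTop
  have hev : ∀ᶠ n : ℕ in Filter.atTop, ((n:ℝ)) ^ Ee < ε/2 :=
    htend.eventually_lt_const (by positivity)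
  obtain ⟨N, hN⟩ := Filter.eventually_atTop.mp hev
  set m : ℕ := N + 1 with hmdef
  have hm : 0 < m := Nat.succ_pos N
  set k : ℕ := 2*m with hkdef2
  have hk : 0 < k := by omega
  have hkN : N ≤ k := by omega
  have hkEe : 2 * ((k:ℝ)) ^ Ee ≤ ε := by
    have := hN k hkN
    linarith
  refine ⟨Stmt13.Top (ENNReal.ofReal p) (ENNReal.ofReal q) hP k, ?_, ?_, ?_, ?_, ?_⟩
  · exact Stmt13.Top_range_fd hP k
  · exact fun x hx => Stmt13.Top_nonneg hP k x hx
  · intro x y hxy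
    have h1 := Stmt13.eps_dp hP hQ (by rw [hPt, hQt]; exact hpq) hk x y hxy
    rw [hPt, hQt] at h1
    refine le_trans h1 ?_
    have hM0 : 0 ≤ max ‖x‖ ‖y‖ := le_trans (norm_nonneg x) (le_max_left _ _)
    exact mul_le_mul_of_nonneg_right hkEe hM0
  · refine ContinuousLinearMap.opNorm_le_bound _ (by positivity) (fun x => ?_)
    have h1 := Stmt13.norm_Top_apply_le hP hQ (by rw [hPt, hQt]; exact hpq.le) hk x
    rwa [hQt] at h1
  · intro S hS
    have h1 := Stmt13.lower_bound hP hQ hm S hS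
    rwa [hQt] at h1
end

section
/- Let E and F be real Banach lattices, ε ≥ 0, and T : E → F a bounded linear operator. Then: (1) if T is positive, then T is ε-minimum preserving if and only if T is ε-disjointness preserving; (2) if T is ε-disjointness preserving, then T is a 2ε-lattice homomorphism; (3) if T is an ε-lattice homomorphism, then T is 4ε-disjointness preserving, and if moreover T is positive, then T is ε-disjointness preserving. -/
section AuxLemmas

variable {α : Type*} [NormedAddCommGroup α] [Lattice α] [HasSolidNorm α] [IsOrderedAddMonoid α]

lemma aux_two_nsmul_sup (a b : α) : (a ⊔ b) + (a ⊔ b) = (a + a) ⊔ (b + b) := by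
  have key : a + b ≤ (a + a) ⊔ (b + b) := by
    rw [← sub_nonneg, sup_sub]
    have : (0:α) ≤ |a - b| := abs_nonneg _
    rw [abs, neg_sub] at this
    convert this using 2 <;> abel
  rw [add_sup, sup_add, sup_add]
  refine le_antisymm (sup_le (sup_le le_sup_left ?_) (sup_le ?_ le_sup_right)) ?_
  · rw [add_comm]; exact key
  · exact key
  · exact sup_le (le_sup_of_le_left le_sup_left) (le_sup_of_le_right le_sup_right)

lemma aux_abs_sup (a b : α) : |a + b| ⊔ |a - b| = |a| + |b| := by
  rw [abs, abs, abs, abs, sup_add, add_sup, add_sup, neg_add, neg_sub, sub_eq_add_neg,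
    show b - a = -a + b from by abel]
  simp [sup_comm, sup_assoc, sup_left_comm]

lemma aux_abs_two (a : α) : |a + a| = |a| + |a| := by
  have h := aux_abs_sup a a
  rwa [sub_self, abs_zero, sup_eq_left.2 (abs_nonneg _)] at h

lemma aux_abs_add (a b : α) : |a + b| + |a - b| = (|a| ⊔ |b|) + (|a| ⊔ |b|) := by
  rw [aux_two_nsmul_sup, ← aux_abs_two a, ← aux_abs_two b]
  conv_lhs => rw [abs, abs]
  rw [sup_add, add_sup, add_sup,
    show a + b + (a - b) = a + a from by abel,
    show a + b + -(a - b) = b + b from by abel,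
    show -(a + b) + (a - b) = -(b + b) from by abel,
    show -(a + b) + -(a - b) = -(a + a) from by abel]
  show _ = (a + a) ⊔ -(a + a) ⊔ ((b + b) ⊔ -(b + b))
  simp [sup_comm, sup_assoc, sup_left_comm]

/-- Key identity: `||a+b| - |a-b|| = 2 (|a| ⊓ |b|)`. -/
lemma aux_key (a b : α) : abs (|a + b| - |a - b|) = |a| ⊓ |b| + |a| ⊓ |b| := by
  have h1 := aux_abs_sup a b
  have h2 := aux_abs_add a b
  have h5 := inf_add_sup |a| |b|
  have hinf : |a + b| ⊓ |a - b| = |a| ⊔ |b| + (|a| ⊔ |b|) - (|a| + |b|) := by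
    have h := inf_add_sup |a + b| |a - b|
    rw [h1, h2] at h
    exact eq_sub_of_add_eq h
  have h3 := sup_sub_inf_eq_abs_sub |a - b| |a + b|
  rw [← h3, sup_comm, inf_comm, h1, hinf, ← h5]
  abel

lemma aux_norm_le {a b : α} (ha : 0 ≤ a) (hab : a ≤ b) : ‖a‖ ≤ ‖b‖ :=
  norm_le_norm_of_abs_le_abs (by rwa [abs_of_nonneg ha, abs_of_nonneg (ha.trans hab)])

lemma aux_posPart_le_abs (a : α) : a⁺ ≤ |a| := by
  unfold posPart; exact sup_le (le_abs_self a) (abs_nonneg a)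

lemma aux_negPart_le_abs (a : α) : a⁻ ≤ |a| := by
  unfold negPart; exact sup_le (neg_le_abs a) (abs_nonneg a)

variable [NormedSpace ℝ α]

lemma aux_smul_nonneg {c : ℝ} (hc : 0 ≤ c) {a : α} (ha : 0 ≤ a) : 0 ≤ c • a := by
  have hdy : ∀ (k m : ℕ), 0 ≤ ((m : ℝ) / 2 ^ k) • a := by
    intro k
    induction k with
    | zero =>
      intro m
      simp only [pow_zero, div_one, Nat.cast_smul_eq_nsmul]
      exact nsmul_nonneg ha m
    | succ k ih =>
      intro m
      apply nsmul_two_semiclosed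
      have h2 : (2 : ℕ) • (((m : ℝ) / 2 ^ (k + 1)) • a) = ((m : ℝ) / 2 ^ k) • a := by
        rw [← Nat.cast_smul_eq_nsmul ℝ, smul_smul]
        congr 1
        push_cast
        ring
      rw [h2]
      exact ih m
  have h2 : Filter.Tendsto (fun n : ℕ => ((⌊c * 2 ^ n⌋₊ : ℝ) / 2 ^ n) • a)
      Filter.atTop (nhds (c • a)) := by
    apply Filter.Tendsto.smul_const
    exact (tendsto_nat_floor_mul_div_atTop hc).comp
      (tendsto_pow_atTop_atTop_of_one_lt one_lt_two)
  exact isClosed_nonneg.mem_of_tendsto h2 (Filter.Eventually.of_forall fun n => hdy n _)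

lemma aux_smul_mono {c : ℝ} (hc : 0 ≤ c) {a b : α} (hab : a ≤ b) : c • a ≤ c • b := by
  rw [← sub_nonneg, ← smul_sub]
  exact aux_smul_nonneg hc (sub_nonneg.2 hab)

lemma aux_smul_inf {c : ℝ} (hc : 0 < c) (a b : α) : c • (a ⊓ b) = (c • a) ⊓ (c • b) := by
  refine le_antisymm (le_inf (aux_smul_mono hc.le inf_le_left)
    (aux_smul_mono hc.le inf_le_right)) ?_
  calc (c • a) ⊓ (c • b) = c • (c⁻¹ • ((c • a) ⊓ (c • b))) := (smul_inv_smul₀ hc.ne' _).symm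
    _ ≤ c • (a ⊓ b) := by
        refine aux_smul_mono hc.le (le_inf ?_ ?_)
        · calc c⁻¹ • ((c • a) ⊓ (c • b)) ≤ c⁻¹ • (c • a) :=
            aux_smul_mono (inv_nonneg.2 hc.le) inf_le_left
          _ = a := inv_smul_smul₀ hc.ne' a
        · calc c⁻¹ • ((c • a) ⊓ (c • b)) ≤ c⁻¹ • (c • b) :=
            aux_smul_mono (inv_nonneg.2 hc.le) inf_le_right
          _ = b := inv_smul_smul₀ hc.ne' b

end AuxLemmas

section AuxT

variable {E F : Type*} [NormedAddCommGroup E] [Lattice E] [HasSolidNorm E] [IsOrderedAddMonoid E] [NormedSpace ℝ E]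
  [NormedAddCommGroup F] [Lattice F] [HasSolidNorm F] [IsOrderedAddMonoid F] [NormedSpace ℝ F]

lemma aux_abs_T_le (T : E →L[ℝ] F) (hT : ∀ x : E, 0 ≤ x → 0 ≤ T x) (z : E) :
    |T z| ≤ T |z| := by
  refine abs_le'.2 ⟨?_, ?_⟩
  · have h := hT _ (sub_nonneg.2 (le_abs_self z))
    rw [map_sub, sub_nonneg] at h
    exact h
  · have h := hT (z + |z|) (by rw [← sub_neg_eq_add, sub_nonneg]; exact neg_le.mpr (neg_le_abs z))
    rw [map_add, ← sub_neg_eq_add, sub_nonneg] at h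
    exact neg_le.2 h

end AuxT

/-- Relations between `ε`-disjointness preserving (ε-DP), `ε`-minimum
preserving (ε-MP) and `ε`-lattice homomorphism (ε-LH) operators:
(1) a positive operator is ε-MP iff it is ε-DP;
(2) an ε-DP operator is a 2ε-LH;
(3) an ε-LH operator is 4ε-DP, and ε-DP if moreover it is positive. -/
theorem stmt17 (E F : Type*)
    [NormedAddCommGroup E] [Lattice E] [HasSolidNorm E] [IsOrderedAddMonoid E] [NormedSpace ℝ E] [CompleteSpace E]
    [NormedAddCommGroup F] [Lattice F] [HasSolidNorm F] [IsOrderedAddMonoid F] [NormedSpace ℝ F] [CompleteSpace F]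
    (ε : ℝ) (hε : 0 ≤ ε) (T : E →L[ℝ] F) :
    ((∀ x : E, 0 ≤ x → 0 ≤ T x) →
      ((∀ x y : E, 0 ≤ x → 0 ≤ y → ‖x‖ ≤ 1 → ‖y‖ ≤ 1 → ‖T x ⊓ T y - T (x ⊓ y)‖ ≤ ε) ↔
        (∀ x y : E, |x| ⊓ |y| = 0 → ‖|T x| ⊓ |T y|‖ ≤ ε * max ‖x‖ ‖y‖))) ∧
    ((∀ x y : E, |x| ⊓ |y| = 0 → ‖|T x| ⊓ |T y|‖ ≤ ε * max ‖x‖ ‖y‖) →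
      (∀ x : E, ‖|T (|x|)| - |T x|‖ ≤ 2 * ε * ‖x‖)) ∧
    ((∀ x : E, ‖|T (|x|)| - |T x|‖ ≤ ε * ‖x‖) →
      ((∀ x y : E, |x| ⊓ |y| = 0 → ‖|T x| ⊓ |T y|‖ ≤ 4 * ε * max ‖x‖ ‖y‖) ∧
        ((∀ x : E, 0 ≤ x → 0 ≤ T x) →
          ∀ x y : E, |x| ⊓ |y| = 0 → ‖|T x| ⊓ |T y|‖ ≤ ε * max ‖x‖ ‖y‖))) := by
  refine ⟨?_, ?_, ?_⟩
  · -- Part 1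
    intro hT
    constructor
    · -- MP → DP
      intro hMP x y hxy
      set M := max ‖x‖ ‖y‖ with hM
      have hM0 : 0 ≤ M := (norm_nonneg x).trans (le_max_left _ _)
      rcases hM0.eq_or_lt with h0 | hpos
      · have hx : x = 0 := norm_eq_zero.1
          (le_antisymm (h0 ▸ le_max_left ‖x‖ ‖y‖) (norm_nonneg x))
        have hy : y = 0 := norm_eq_zero.1
          (le_antisymm (h0 ▸ le_max_right ‖x‖ ‖y‖) (norm_nonneg y))
        subst hx; subst hy
        simp [map_zero]
        positivity
      · have hxM : ‖x‖ ≤ M := le_max_left _ _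
        have hyM : ‖y‖ ≤ M := le_max_right _ _
        have hMinv : (0:ℝ) < M⁻¹ := inv_pos.2 hpos
        have h1 : 0 ≤ M⁻¹ • (|x| : E) := aux_smul_nonneg hMinv.le (abs_nonneg x)
        have h2 : 0 ≤ M⁻¹ • (|y| : E) := aux_smul_nonneg hMinv.le (abs_nonneg y)
        have hn1 : ‖M⁻¹ • (|x| : E)‖ ≤ 1 := by
          rw [norm_smul, norm_abs_eq_norm, Real.norm_eq_abs, abs_of_pos hMinv]
          calc M⁻¹ * ‖x‖ ≤ M⁻¹ * M := mul_le_mul_of_nonneg_left hxM hMinv.le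
            _ = 1 := inv_mul_cancel₀ hpos.ne'
        have hn2 : ‖M⁻¹ • (|y| : E)‖ ≤ 1 := by
          rw [norm_smul, norm_abs_eq_norm, Real.norm_eq_abs, abs_of_pos hMinv]
          calc M⁻¹ * ‖y‖ ≤ M⁻¹ * M := mul_le_mul_of_nonneg_left hyM hMinv.le
            _ = 1 := inv_mul_cancel₀ hpos.ne'
        have hinf : (M⁻¹ • (|x| : E)) ⊓ (M⁻¹ • (|y| : E)) = 0 := by
          rw [← aux_smul_inf hMinv, hxy, smul_zero]
        have key := hMP _ _ h1 h2 hn1 hn2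
        rw [hinf, map_zero, sub_zero, map_smul, map_smul, ← aux_smul_inf hMinv,
          norm_smul, Real.norm_eq_abs, abs_of_pos hMinv] at key
        have hw : ‖T (|x|) ⊓ T (|y|)‖ ≤ ε * M := by
          have h3 := mul_le_mul_of_nonneg_left key hpos.le
          rwa [← mul_assoc, mul_inv_cancel₀ hpos.ne', one_mul, mul_comm M ε] at h3
        have hle : |T x| ⊓ |T y| ≤ T (|x|) ⊓ T (|y|) :=
          inf_le_inf (aux_abs_T_le T hT x) (aux_abs_T_le T hT y)
        have h0' : 0 ≤ |T x| ⊓ |T y| := le_inf (abs_nonneg _) (abs_nonneg _)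
        exact (aux_norm_le h0' hle).trans hw
    · -- DP → MP
      intro hDP x y hx hy hnx hny
      have hm : 0 ≤ x ⊓ y := le_inf hx hy
      have hu0 : 0 ≤ x - x ⊓ y := sub_nonneg.2 inf_le_left
      have hv0 : 0 ≤ y - x ⊓ y := sub_nonneg.2 inf_le_right
      have hdisj : |x - x ⊓ y| ⊓ |y - x ⊓ y| = 0 := by
        rw [abs_of_nonneg hu0, abs_of_nonneg hv0, ← inf_sub, sub_self]
      have hub : ‖x - x ⊓ y‖ ≤ 1 := (aux_norm_le hu0 (sub_le_self x hm)).trans hnx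
      have hvb : ‖y - x ⊓ y‖ ≤ 1 := (aux_norm_le hv0 (sub_le_self y hm)).trans hny
      have key := hDP _ _ hdisj
      rw [abs_of_nonneg (hT _ hu0), abs_of_nonneg (hT _ hv0)] at key
      have heq : T x ⊓ T y - T (x ⊓ y) = T (x - x ⊓ y) ⊓ T (y - x ⊓ y) := by
        rw [map_sub, map_sub, inf_sub]
      rw [heq]
      calc ‖T (x - x ⊓ y) ⊓ T (y - x ⊓ y)‖ ≤ ε * max ‖x - x ⊓ y‖ ‖y - x ⊓ y‖ := key
        _ ≤ ε * 1 := mul_le_mul_of_nonneg_left (max_le hub hvb) hε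
        _ = ε := mul_one ε
  · -- Part 2 : DP → 2ε-LH
    intro hDP x
    have hd : |(x⁺ : E)| ⊓ |(x⁻ : E)| = 0 := by
      rw [abs_of_nonneg (posPart_nonneg x), abs_of_nonneg (negPart_nonneg x)]
      exact posPart_inf_negPart_eq_zero x
    have key := hDP _ _ hd
    have hmax : max ‖(x⁺ : E)‖ ‖(x⁻ : E)‖ ≤ ‖x‖ := by
      refine max_le ?_ ?_
      · rw [← norm_abs_eq_norm x]
        exact aux_norm_le (posPart_nonneg x) (aux_posPart_le_abs x)
      · rw [← norm_abs_eq_norm x]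
        exact aux_norm_le (negPart_nonneg x) (aux_negPart_le_abs x)
    have e1 : T (|x|) = T x⁺ + T x⁻ := by rw [← map_add, posPart_add_negPart]
    have e2 : T x = T x⁺ - T x⁻ := by rw [← map_sub, posPart_sub_negPart]
    have hk := aux_key (T x⁺) (T x⁻)
    have hεm : ε * max ‖(x⁺ : E)‖ ‖(x⁻ : E)‖ ≤ ε * ‖x‖ :=
      mul_le_mul_of_nonneg_left hmax hε
    calc ‖|T (|x|)| - |T x|‖ = ‖abs (|T (|x|)| - |T x|)‖ := (norm_abs_eq_norm _).symm
      _ = ‖|T x⁺| ⊓ |T x⁻| + |T x⁺| ⊓ |T x⁻|‖ := by rw [e1, e2, hk]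
      _ ≤ ‖|T x⁺| ⊓ |T x⁻|‖ + ‖|T x⁺| ⊓ |T x⁻|‖ := norm_add_le _ _
      _ ≤ 2 * ε * ‖x‖ := by
          have h1 := key.trans hεm
          linarith
  · -- Part 3 : LH → DP
    intro hLH
    constructor
    · -- general : 4ε-DP
      intro x y hd
      set M := max ‖x‖ ‖y‖ with hM
      have hM0 : 0 ≤ M := (norm_nonneg x).trans (le_max_left _ _)
      have hk := aux_key x y
      rw [hd, add_zero] at hk
      have heq : |x + y| = |x - y| := by
        have ha : |x + y| - |x - y| ≤ 0 := hk ▸ le_abs_self _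
        have hb' : -(|x + y| - |x - y|) ≤ 0 := hk ▸ neg_le_abs _
        exact sub_eq_zero.1 (le_antisymm ha (neg_nonpos.mp hb'))
      have hkey := aux_key (T x) (T y)
      rw [show T x + T y = T (x + y) from (map_add T x y).symm,
        show T x - T y = T (x - y) from (map_sub T x y).symm] at hkey
      have hsplit : |T (x + y)| - |T (x - y)| =
          (|T (x + y)| - |T (|x + y|)|) + (|T (|x - y|)| - |T (x - y)|) := by
        rw [heq]; abel
      have hb : ‖|T (x + y)| - |T (x - y)|‖ ≤ ε * ‖x + y‖ + ε * ‖x - y‖ := by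
        rw [hsplit]
        refine (norm_add_le _ _).trans (add_le_add ?_ ?_)
        · rw [norm_sub_rev]; exact hLH (x + y)
        · exact hLH (x - y)
      have hxy1 : ‖x + y‖ ≤ M + M :=
        (norm_add_le x y).trans (add_le_add (le_max_left _ _) (le_max_right _ _))
      have hxy2 : ‖x - y‖ ≤ M + M :=
        (norm_sub_le x y).trans (add_le_add (le_max_left _ _) (le_max_right _ _))
      have h2v : ‖|T x| ⊓ |T y| + |T x| ⊓ |T y|‖ = 2 * ‖|T x| ⊓ |T y|‖ := by
        rw [← two_smul ℝ (|T x| ⊓ |T y|), norm_smul, Real.norm_ofNat]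
      have hchain : 2 * ‖|T x| ⊓ |T y|‖ ≤ ε * ‖x + y‖ + ε * ‖x - y‖ := by
        rw [← h2v, ← hkey, norm_abs_eq_norm]
        exact hb
      have hb1 : ε * ‖x + y‖ ≤ ε * (M + M) := mul_le_mul_of_nonneg_left hxy1 hε
      have hb2 : ε * ‖x - y‖ ≤ ε * (M + M) := mul_le_mul_of_nonneg_left hxy2 hε
      have hfin : 0 ≤ ε * M := mul_nonneg hε hM0
      nlinarith
    · -- positive : ε-DP
      intro hT x y hd
      set M := max ‖x‖ ‖y‖ with hM
      have hM0 : 0 ≤ M := (norm_nonneg x).trans (le_max_left _ _)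
      have h1 := sup_sub_inf_eq_abs_sub (|y| : E) (|x|)
      rw [inf_comm, hd, sub_zero] at h1
      have hsum : |y| ⊔ |x| = |y| + |x| := by
        have h2 := inf_add_sup (|y| : E) (|x|)
        rw [inf_comm, hd, zero_add] at h2
        exact h2
      have habsz : abs (|x| - |y|) = |y| + |x| := by rw [← h1, hsum]
      have hid := two_nsmul_inf_eq_add_sub_abs_sub (T (|x|)) (T (|y|))
      have e3 : T (|x|) + T (|y|) = T (abs (|x| - |y|)) := by
        rw [← map_add]
        exact congrArg T (by rw [habsz]; abel)
      have e4 : abs (T (|y|) - T (|x|)) = |T (|x| - |y|)| := by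
        rw [show T (|y|) - T (|x|) = -(T (|x| - |y|)) from by rw [map_sub]; abel, abs_neg]
      rw [two_nsmul, e3, e4] at hid
      -- hid : T|x| ⊓ T|y| + T|x| ⊓ T|y| = T (abs (|x|-|y|)) - |T (|x|-|y|)|
      have hTz : T (abs (|x| - |y|)) = |T (abs (|x| - |y|))| :=
        (abs_of_nonneg (hT _ (abs_nonneg _))).symm
      have hz : ‖(|x| - |y| : E)‖ ≤ M + M := by
        rw [← norm_abs_eq_norm, habsz]
        calc ‖(|y| + |x| : E)‖ ≤ ‖(|y| : E)‖ + ‖(|x| : E)‖ := norm_add_le _ _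
          _ = ‖y‖ + ‖x‖ := by rw [norm_abs_eq_norm, norm_abs_eq_norm]
          _ ≤ M + M := add_le_add (le_max_right _ _) (le_max_left _ _)
      have h2v : ‖T (|x|) ⊓ T (|y|) + T (|x|) ⊓ T (|y|)‖ = 2 * ‖T (|x|) ⊓ T (|y|)‖ := by
        rw [← two_smul ℝ (T (|x|) ⊓ T (|y|)), norm_smul, Real.norm_ofNat]
      have hchain : 2 * ‖T (|x|) ⊓ T (|y|)‖ ≤ ε * (M + M) := by
        rw [← h2v, hid, hTz]
        exact (hLH (|x| - |y|)).trans (mul_le_mul_of_nonneg_left hz hε)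
      have hle : |T x| ⊓ |T y| ≤ T (|x|) ⊓ T (|y|) :=
        inf_le_inf (aux_abs_T_le T hT x) (aux_abs_T_le T hT y)
      have h0' : 0 ≤ |T x| ⊓ |T y| := le_inf (abs_nonneg _) (abs_nonneg _)
      have := aux_norm_le h0' hle
      nlinarith
end
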